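/- arXiv:1308.3408 — 4 statements merged into one kernel-verified Lean document; each statement's English description precedes it below -/
import Mathlib

section
/- Let G_1 and G_2 be finite groups, let K_1 ≤ Z(G_1) and K_2 ≤ Z(G_2) be central subgroups, and let θ : G_1 → G_2 be a group homomorphism whose restriction θ|_{K_1} : K_1 → K_2 is an isomorphism onto K_2. Let E = G_1 × G_2, let N = {(a, θ(a)⁻¹) : a ∈ K_1} (a central subgroup of E), and let G = E/N. If B_0(G_1/K_1) = 0, B_0(G_1) = 0 and B_0(G_2) = 0, then B_0(G) = 0. -/
open Matrix

/-! ### The group `ℚ/ℤ` and the Bogomolov multiplier -/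

/-- The group `ℚ/ℤ`. -/
abbrev QmodZ : Type := AddCircle (1 : ℚ)

/-- A `2`-cocycle on `G` with values in `ℚ/ℤ` (trivial `G`-action). -/
def IsTwoCocycle {G : Type*} [Group G] (f : G → G → QmodZ) : Prop :=
  ∀ g h k : G, f g h + f (g * h) k = f g (h * k) + f h k

/-- A `2`-coboundary on `G` with values in `ℚ/ℤ` (trivial `G`-action). -/
def IsTwoCoboundary {G : Type*} [Group G] (f : G → G → QmodZ) : Prop :=
  ∃ φ : G → QmodZ, ∀ g h : G, f g h = φ g + φ h - φ (g * h)

/-- A group is bicyclic if it is either cyclic or a direct product of two cyclic groups. -/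
def IsBicyclic (A : Type u) [Group A] : Prop :=
  IsCyclic A ∨ ∃ (B C : Type u) (gB : Group B) (gC : Group C),
    letI := gB
    letI := gC
    IsCyclic B ∧ IsCyclic C ∧ Nonempty (A ≃* (B × C))

/-- `B₀(G) = 0`: every class in `H²(G, ℚ/ℤ)` (with trivial action), i.e. every 2-cocycle
modulo 2-coboundaries, whose restriction to every bicyclic subgroup `A ≤ G` vanishes
(i.e. becomes a coboundary on `A`), is itself zero (i.e. is a coboundary on `G`).
This says exactly that the Bogomolov multiplier
`B₀(G) = ⋂_A ker (res : H²(G,ℚ/ℤ) → H²(A,ℚ/ℤ))` is trivial. -/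
def BogomolovMultiplierTrivial (G : Type u) [Group G] : Prop :=
  ∀ f : G → G → QmodZ, IsTwoCocycle f →
    (∀ A : Subgroup G, IsBicyclic ↥A →
      IsTwoCoboundary (fun a b : ↥A => f ↑a ↑b)) →
    IsTwoCoboundary f

/-! ### Unitriangular groups -/

/-- The predicate on `n × n` matrices over `F_p` defining `UT_n^ℓ(F_p)`:
the matrix is upper unitriangular (all diagonal entries are `1`, all entries below the
diagonal are `0`) and moreover the first `ℓ - 1` diagonals above the main diagonal vanish,
i.e. `A i j = 0` whenever `j < i` or `0 < j - i < ℓ`. -/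
def UTP (n p ℓ : ℕ) (A : Matrix (Fin n) (Fin n) (ZMod p)) : Prop :=
  (∀ i, A i i = 1) ∧
    ∀ i j : Fin n, ((j : ℕ) < (i : ℕ) ∨ ((i : ℕ) < (j : ℕ) ∧ (j : ℕ) - (i : ℕ) < ℓ)) →
      A i j = 0

lemma UTP.one (n p ℓ : ℕ) : UTP n p ℓ (1 : Matrix (Fin n) (Fin n) (ZMod p)) := by
  constructor
  · intro i; exact Matrix.one_apply_eq i
  · intro i j h
    have hne : i ≠ j := by
      rintro rfl; omega
    exact Matrix.one_apply_ne hne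

lemma UTP.mul {n p ℓ : ℕ} {A B : Matrix (Fin n) (Fin n) (ZMod p)}
    (hA : UTP n p ℓ A) (hB : UTP n p ℓ B) : UTP n p ℓ (A * B) := by
  constructor
  · intro i
    rw [Matrix.mul_apply, Finset.sum_eq_single i]
    · rw [hA.1, hB.1, one_mul]
    · intro k _ hk
      have hk' : (k : ℕ) ≠ (i : ℕ) := fun h => hk (Fin.ext h)
      rcases Nat.lt_or_ge (k : ℕ) (i : ℕ) with h | h
      · rw [hA.2 i k (Or.inl h), zero_mul]
      · have h' : (i : ℕ) < (k : ℕ) := by omega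
        rw [hB.2 k i (Or.inl h'), mul_zero]
    · intro h; exact absurd (Finset.mem_univ i) h
  · intro i j hij
    rw [Matrix.mul_apply]
    apply Finset.sum_eq_zero
    intro k _
    by_cases h1 : (k : ℕ) < (i : ℕ) ∨ ((i : ℕ) < (k : ℕ) ∧ (k : ℕ) - (i : ℕ) < ℓ)
    · rw [hA.2 i k h1, zero_mul]
    by_cases h2 : (j : ℕ) < (k : ℕ) ∨ ((k : ℕ) < (j : ℕ) ∧ (j : ℕ) - (k : ℕ) < ℓ)
    · rw [hB.2 k j h2, mul_zero]
    exfalso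
    push_neg at h1 h2
    omega

lemma UTP.pow {n p ℓ : ℕ} {A : Matrix (Fin n) (Fin n) (ZMod p)}
    (hA : UTP n p ℓ A) (m : ℕ) : UTP n p ℓ (A ^ m) := by
  induction m with
  | zero => simpa using UTP.one n p ℓ
  | succ m ih => rw [pow_succ]; exact ih.mul hA

/-- `UT_n^ℓ(F_p)`: the subgroup of `UT_n(F_p)` consisting of all unitriangular matrices
whose first `ℓ - 1` diagonals above the main diagonal are zero (i.e. `A i j = 0`
whenever `0 < j - i < ℓ`), realized as a subgroup of the units of the matrix ring. -/
def UTd (n p ℓ : ℕ) [Fact p.Prime] : Subgroup (Matrix (Fin n) (Fin n) (ZMod p))ˣ where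
  carrier := {x | UTP n p ℓ (x : Matrix (Fin n) (Fin n) (ZMod p))}
  one_mem' := by
    show UTP n p ℓ ((1 : (Matrix (Fin n) (Fin n) (ZMod p))ˣ) : Matrix (Fin n) (Fin n) (ZMod p))
    rw [Units.val_one]; exact UTP.one n p ℓ
  mul_mem' := by
    intro a b ha hb
    show UTP n p ℓ ((a * b : (Matrix (Fin n) (Fin n) (ZMod p))ˣ) : Matrix (Fin n) (Fin n) (ZMod p))
    rw [Units.val_mul]
    exact UTP.mul ha hb
  inv_mem' := by
    intro x hx
    show UTP n p ℓ ((x⁻¹ : (Matrix (Fin n) (Fin n) (ZMod p))ˣ) : Matrix (Fin n) (Fin n) (ZMod p))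
    have hpos : 0 < orderOf x := orderOf_pos x
    have h1 : x ^ (orderOf x - 1) * x = 1 := by
      have := pow_orderOf_eq_one x
      rwa [← Nat.succ_pred_eq_of_pos hpos, pow_succ] at this
    have h2 : x⁻¹ = x ^ (orderOf x - 1) := inv_eq_of_mul_eq_one_left h1
    rw [h2, Units.val_pow_eq_pow_val]
    exact UTP.pow hx _

/-- `UT_n(F_p)`: the group of upper unitriangular `n × n` matrices over `F_p`
(all diagonal entries equal `1`, all entries below the diagonal equal `0`),
realized as a subgroup of the units of the matrix ring. -/
def UT (n p : ℕ) [Fact p.Prime] : Subgroup (Matrix (Fin n) (Fin n) (ZMod p))ˣ :=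
  (UTd n p 1).copy
    {x | (∀ i, (x : Matrix (Fin n) (Fin n) (ZMod p)) i i = 1) ∧
      ∀ i j : Fin n, (j : ℕ) < (i : ℕ) → (x : Matrix (Fin n) (Fin n) (ZMod p)) i j = 0}
    (by
      ext x
      constructor
      · rintro ⟨h1, h2⟩
        refine ⟨h1, fun i j h => ?_⟩
        rcases h with h | h
        · exact h2 i j h
        · omega
      · rintro ⟨h1, h2⟩
        exact ⟨h1, fun i j h => h2 i j (by omega)⟩)

/-! ### Elementary transvections -/

/-- The elementary transvection `1 + c·E_{ab}` (for `a ≠ b`) as a unit of the matrix ring. -/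
def tvUnit (n p : ℕ) [Fact p.Prime] (a b : Fin n) (hab : a ≠ b) (c : ZMod p) :
    (Matrix (Fin n) (Fin n) (ZMod p))ˣ where
  val := Matrix.transvection a b c
  inv := Matrix.transvection a b (-c)
  val_inv := by
    rw [Matrix.transvection_mul_transvection_same a b hab, add_neg_cancel]
    simp [Matrix.transvection]
  inv_val := by
    rw [Matrix.transvection_mul_transvection_same a b hab, neg_add_cancel]
    simp [Matrix.transvection]

lemma tvUnit_mem_UT (n p : ℕ) [Fact p.Prime] (a b : Fin n) (hab : (a : ℕ) < (b : ℕ))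
    (c : ZMod p) : tvUnit n p a b (Fin.ne_of_val_ne (Nat.ne_of_lt hab)) c ∈ UT n p := by
  constructor
  · intro i
    simp only [tvUnit, Matrix.transvection, Matrix.add_apply, Matrix.one_apply_eq,
      Matrix.single, Matrix.of_apply]
    have : ¬(a = i ∧ b = i) := by
      rintro ⟨rfl, rfl⟩; omega
    rw [if_neg this, add_zero]
  · intro i j hij
    have hne : i ≠ j := by rintro rfl; omega
    simp only [tvUnit, Matrix.transvection, Matrix.add_apply, Matrix.one_apply_ne hne,
      Matrix.single, Matrix.of_apply]
    have : ¬(a = i ∧ b = j) := by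
      rintro ⟨rfl, rfl⟩; omega
    rw [if_neg this, add_zero]

/-- The elementary transvection `t_{ij}(c) = 1 + c·E_{ij}` as an element of `UT_n(F_p)`.
Here `i, j` are 1-indexed (as in the paper): `1 ≤ i < j ≤ n`. -/
def tv (n p : ℕ) [Fact p.Prime] (i j : ℕ) (h1 : 1 ≤ i) (hij : i < j) (hjn : j ≤ n)
    (c : ZMod p) : ↥(UT n p) :=
  ⟨tvUnit n p ⟨i - 1, by omega⟩ ⟨j - 1, by omega⟩
      (Fin.ne_of_val_ne (by simp; omega)) c,
    tvUnit_mem_UT n p ⟨i - 1, by omega⟩ ⟨j - 1, by omega⟩ (by simp; omega) c⟩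

lemma tv_mul (n p : ℕ) [Fact p.Prime] (i j : ℕ) (h1 : 1 ≤ i) (hij : i < j) (hjn : j ≤ n)
    (c d : ZMod p) :
    tv n p i j h1 hij hjn c * tv n p i j h1 hij hjn d = tv n p i j h1 hij hjn (c + d) := by
  apply Subtype.ext
  apply Units.ext
  show Matrix.transvection _ _ c * Matrix.transvection _ _ d = Matrix.transvection _ _ (c + d)
  exact Matrix.transvection_mul_transvection_same _ _ (Fin.ne_of_val_ne (by simp; omega)) c d

lemma tv_zero (n p : ℕ) [Fact p.Prime] (i j : ℕ) (h1 : 1 ≤ i) (hij : i < j) (hjn : j ≤ n) :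
    tv n p i j h1 hij hjn 0 = 1 := by
  apply Subtype.ext
  apply Units.ext
  show Matrix.transvection _ _ (0 : ZMod p) = 1
  simp [Matrix.transvection]

lemma tv_inv (n p : ℕ) [Fact p.Prime] (i j : ℕ) (h1 : 1 ≤ i) (hij : i < j) (hjn : j ≤ n)
    (c : ZMod p) : (tv n p i j h1 hij hjn c)⁻¹ = tv n p i j h1 hij hjn (-c) := by
  refine inv_eq_of_mul_eq_one_right ?_
  rw [tv_mul, add_neg_cancel, tv_zero]

/-! ### The corner transvection is central -/

lemma ut_mul_stdBasis_comm {n p : ℕ} {A : Matrix (Fin n) (Fin n) (ZMod p)}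
    (hd : ∀ i, A i i = 1) (hl : ∀ i j : Fin n, (j : ℕ) < (i : ℕ) → A i j = 0)
    (f l : Fin n) (hf : (f : ℕ) = 0) (hlv : (l : ℕ) = n - 1) (hn : 2 ≤ n) (c : ZMod p) :
    A * Matrix.single f l c = Matrix.single f l c * A := by
  ext x y
  by_cases hy : y = l
  · subst hy
    rw [Matrix.mul_single_apply_same]
    by_cases hx : x = f
    · subst hx
      rw [Matrix.single_mul_apply_same, hd, hd, one_mul, mul_one]
    · have h1 : A x f = 0 := by
        apply hl
        have : (x : ℕ) ≠ (f : ℕ) := fun h => hx (Fin.ext h)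
        omega
      rw [h1, zero_mul, Matrix.single_mul_apply_of_ne _ _ _ _ _ hx, ]
  · rw [Matrix.mul_single_apply_of_ne _ _ _ _ _ hy]
    by_cases hx : x = f
    · subst hx
      rw [Matrix.single_mul_apply_same]
      have h1 : A l y = 0 := by
        apply hl
        have : (y : ℕ) ≠ (l : ℕ) := fun h => hy (Fin.ext h)
        have := y.isLt
        omega
      rw [h1, mul_zero]
    · rw [Matrix.single_mul_apply_of_ne _ _ _ _ _ hx]

/-- The corner transvection `t_{1,n}(c)` commutes with every element of `UT_n(F_p)`. -/
lemma tv_corner_central (n p : ℕ) [Fact p.Prime] (hn : 2 ≤ n) (c : ZMod p) (g : ↥(UT n p)) :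
    Commute g (tv n p 1 n (le_refl 1) (by omega) (le_refl n) c) := by
  obtain ⟨hd, hl⟩ := g.2
  unfold Commute SemiconjBy
  apply Subtype.ext
  apply Units.ext
  show ((g : (Matrix (Fin n) (Fin n) (ZMod p))ˣ) : Matrix (Fin n) (Fin n) (ZMod p)) *
      Matrix.transvection _ _ c =
    Matrix.transvection _ _ c *
      ((g : (Matrix (Fin n) (Fin n) (ZMod p))ˣ) : Matrix (Fin n) (Fin n) (ZMod p))
  rw [Matrix.transvection, mul_add, add_mul, mul_one, one_mul]
  congr 1
  exact ut_mul_stdBasis_comm hd hl _ _ rfl rfl hn c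

/-! ### The central product of two unitriangular groups -/

/-- The central subgroup `N = {(a, θ(a)⁻¹) : a ∈ K₁}` of `UT_k(F_p) × UT_n(F_p)`, where
`K₁ = ⟨t_{1,k}(1)⟩ = Z(UT_k(F_p))` and `θ : K₁ → K₂ = ⟨t_{1,n}(1)⟩ = Z(UT_n(F_p))` is the
isomorphism sending `t_{1,k}(λ)` to `t_{1,n}(λ)`. -/
def cpN (k n p : ℕ) [Fact p.Prime] (hk : 2 ≤ k) (hn : 2 ≤ n) :
    Subgroup (↥(UT k p) × ↥(UT n p)) where
  carrier := {x | ∃ c : ZMod p,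
    x = (tv k p 1 k (le_refl 1) (by omega) (le_refl k) c,
         (tv n p 1 n (le_refl 1) (by omega) (le_refl n) c)⁻¹)}
  one_mem' := ⟨0, by rw [tv_zero, tv_zero, inv_one]; rfl⟩
  mul_mem' := by
    rintro x y ⟨c, rfl⟩ ⟨d, rfl⟩
    refine ⟨c + d, ?_⟩
    rw [Prod.mk_mul_mk, tv_mul, ← _root_.mul_inv_rev, tv_mul, add_comm d c]
  inv_mem' := by
    rintro x ⟨c, rfl⟩
    refine ⟨-c, ?_⟩
    rw [Prod.inv_mk, tv_inv, inv_inv, tv_inv, neg_neg]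

lemma cpN_normal (k n p : ℕ) [Fact p.Prime] (hk : 2 ≤ k) (hn : 2 ≤ n) :
    (cpN k n p hk hn).Normal := by
  constructor
  rintro x ⟨c, rfl⟩ g
  refine ⟨c, ?_⟩
  have h1 := (tv_corner_central k p hk c g.1).eq
  have h2 := ((tv_corner_central n p hn c g.2).inv_right).eq
  rw [Prod.ext_iff]
  constructor
  · show g.1 * _ * g.1⁻¹ = _
    rw [h1, mul_inv_cancel_right]
  · show g.2 * _ * g.2⁻¹ = _
    rw [h2, mul_inv_cancel_right]

/-! ### Auxiliary lemmas for the main theorem -/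

section AuxBasic
variable {G : Type*} [Group G]

lemma cocycle_one_left {f : G → G → QmodZ} (hf : IsTwoCocycle f) (g : G) :
    f 1 g = f 1 1 := by
  have h := hf 1 1 g
  simp only [one_mul] at h
  exact (add_right_cancel h).symm

lemma cocycle_one_right {f : G → G → QmodZ} (hf : IsTwoCocycle f) (g : G) :
    f g 1 = f 1 1 := by
  have h := hf g 1 1
  simp only [mul_one, one_mul] at h
  exact add_left_cancel h

lemma cocycle_sub_const {f : G → G → QmodZ} (hf : IsTwoCocycle f) (c : QmodZ) :
    IsTwoCocycle (fun g h => f g h - c) := by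
  intro g h k
  dsimp only
  rw [sub_add_sub_comm, sub_add_sub_comm, hf g h k]

lemma coboundary_add_const {f : G → G → QmodZ} {c : QmodZ}
    (h : IsTwoCoboundary fun g h => f g h - c) : IsTwoCoboundary f := by
  obtain ⟨φ, hφ⟩ := h
  refine ⟨fun g => φ g + c, fun g h => ?_⟩
  have h2 := hφ g h
  dsimp only at h2
  rw [sub_eq_iff_eq_add] at h2
  rw [h2]; dsimp only; abel

lemma coboundary_sub_const {f : G → G → QmodZ} (c : QmodZ)
    (h : IsTwoCoboundary f) : IsTwoCoboundary fun g h => f g h - c := by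
  obtain ⟨φ, hφ⟩ := h
  refine ⟨fun g => φ g - c, fun g h => ?_⟩
  dsimp only
  rw [hφ g h]; abel

lemma cocycle_comp {H : Type*} [Group H] (π : G →* H) {f : H → H → QmodZ}
    (hf : IsTwoCocycle f) : IsTwoCocycle (fun a b : G => f (π a) (π b)) := by
  intro g h k
  dsimp only
  rw [_root_.map_mul, _root_.map_mul]
  exact hf _ _ _

lemma coboundary_comp {H : Type*} [Group H] (π : G →* H) {f : H → H → QmodZ}
    (hf : IsTwoCoboundary f) : IsTwoCoboundary (fun a b : G => f (π a) (π b)) := by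
  obtain ⟨φ, hφ⟩ := hf
  exact ⟨fun g => φ (π g), fun g h => by dsimp only; rw [_root_.map_mul]; exact hφ _ _⟩

end AuxBasic

section Cyclic

/-- Every 2-cocycle on a finite cyclic group with values in `ℚ/ℤ` is a coboundary. -/
lemma cyclic_coboundary {H : Type*} [Group H] [Finite H] (hc : IsCyclic H)
    (f : H → H → QmodZ) (hf : IsTwoCocycle f) : IsTwoCoboundary f := by
  -- normalize
  apply coboundary_add_const (c := f 1 1)
  set F : H → H → QmodZ := fun g h => f g h - f 1 1 with hF
  have hFc : IsTwoCocycle F := cocycle_sub_const hf _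
  have hFl : ∀ x, F 1 x = 0 := by
    intro x; simp only [hF]; rw [cocycle_one_left hf, sub_self]
  have hFr : ∀ x, F x 1 = 0 := by
    intro x; simp only [hF]; rw [cocycle_one_right hf, sub_self]
  clear_value F
  clear hF
  obtain ⟨g, hg⟩ := hc.exists_generator
  haveI := Fintype.ofFinite H
  set n := orderOf g with hn
  have hnpos : 0 < n := orderOf_pos g
  have ex : ∀ x : H, ∃ k : ℕ, g ^ k = x := by
    intro x
    obtain ⟨z, hz⟩ := Subgroup.mem_zpowers_iff.mp (hg x)
    refine ⟨(z % (n : ℤ)).toNat, ?_⟩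
    have h0 : (0:ℤ) ≤ z % (n : ℤ) := Int.emod_nonneg z (by exact_mod_cast hnpos.ne')
    rw [← _root_.zpow_natCast, Int.toNat_of_nonneg h0, hn, zpow_mod_orderOf, hz]
  classical
  -- discrete log
  set dl : H → ℕ := fun x => Nat.find (ex x) with hdl
  have hdl_spec : ∀ x, g ^ dl x = x := fun x => Nat.find_spec (ex x)
  have hdl_lt : ∀ x, dl x < n := by
    intro x
    obtain ⟨k, hk⟩ := ex x
    have hk' : g ^ (k % n) = x := by rw [hn, pow_mod_orderOf, hk]
    exact lt_of_le_of_lt (Nat.find_min' (ex x) hk') (Nat.mod_lt _ hnpos)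
  -- sum over range n equals sum over the group
  have hrange : ∀ (F' : H → QmodZ), ∑ j ∈ Finset.range n, F' (g ^ j) = ∑ x : H, F' x := by
    intro F'
    refine Finset.sum_nbij' (i := fun j => g ^ j) (j := fun x => dl x) ?_ ?_ ?_ ?_ ?_
    · intro a _; exact Finset.mem_univ _
    · intro x _; exact Finset.mem_range.mpr (hdl_lt x)
    · intro a ha
      have h1 : g ^ dl (g ^ a) = g ^ a := hdl_spec _
      have h2 := pow_eq_pow_iff_modEq.mp h1
      have h3 := hdl_lt (g ^ a)
      have ha' := Finset.mem_range.mp ha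
      rw [Nat.ModEq, Nat.mod_eq_of_lt h3, Nat.mod_eq_of_lt ha'] at h2
      exact h2
    · intro x _; exact hdl_spec x
    · intro a _; rfl
  set s : QmodZ := ∑ x : H, F x g with hs
  set t : QmodZ := DivisibleBy.div s (n : ℤ) with ht
  have hts : (n : ℤ) • t = s := DivisibleBy.div_cancel s (by exact_mod_cast hnpos.ne')
  set ξ : ℕ → QmodZ := fun k => (k : ℤ) • t - ∑ i ∈ Finset.range k, F (g ^ i) g with hξ
  have hshift : ∀ k, ∑ j ∈ Finset.range n, F (g ^ (k + j)) g = s := by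
    intro k
    have h1 : ∀ j, F (g ^ (k + j)) g = F (g ^ k * g ^ j) g := by
      intro j; rw [pow_add]
    calc ∑ j ∈ Finset.range n, F (g ^ (k + j)) g
        = ∑ j ∈ Finset.range n, F (g ^ k * g ^ j) g := by
          exact Finset.sum_congr rfl fun j _ => h1 j
      _ = ∑ x : H, F (g ^ k * x) g := hrange (fun x => F (g ^ k * x) g)
      _ = ∑ x : H, F x g := Fintype.sum_bijective (fun x => g ^ k * x)
          (Group.mulLeft_bijective (g ^ k)) _ _ (fun x => rfl)
  have hper : ∀ k, ξ (k + n) = ξ k := by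
    intro k
    simp only [hξ]
    rw [Finset.sum_range_add, Nat.cast_add, add_smul, hshift k, hts]
    abel
  have hper' : ∀ c k, ξ (k + c * n) = ξ k := by
    intro c
    induction c with
    | zero => intro k; simp
    | succ c ih =>
      intro k
      have : k + (c + 1) * n = (k + c * n) + n := by ring
      rw [this, hper, ih]
  have hxi : ∀ k l, g ^ k = g ^ l → ξ k = ξ l := by
    have key : ∀ k l, k ≤ l → g ^ k = g ^ l → ξ k = ξ l := by
      intro k l hkl hgl
      have h2 := pow_eq_pow_iff_modEq.mp hgl
      have h3 : (n : ℕ) ∣ l - k := (Nat.modEq_iff_dvd' hkl).mp h2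
      obtain ⟨c, hc⟩ := h3
      have h4 : l = k + c * n := by rw [mul_comm c n, ← hc]; omega
      rw [h4, hper']
    intro k l hgl
    rcases le_total k l with h | h
    · exact key k l h hgl
    · exact (key l k h hgl.symm).symm
  set φ : H → QmodZ := fun x => ξ (dl x) with hφd
  have hφpow : ∀ k, φ (g ^ k) = ξ k := by
    intro k
    exact hxi _ _ (hdl_spec (g ^ k))
  have hK3 : ∀ (x : H) (b : ℕ), F x (g ^ b) =
      ∑ i ∈ Finset.range b, (F (x * g ^ i) g - F (g ^ i) g) := by
    intro x b
    induction b with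
    | zero => simp [hFr]
    | succ b ih =>
      have hcc := hFc x (g ^ b) g
      rw [← pow_succ] at hcc
      have : F x (g ^ (b+1)) = F x (g ^ b) + F (x * g ^ b) g - F (g ^ b) g := by
        rw [eq_sub_iff_add_eq]; exact hcc.symm
      rw [this, ih, Finset.sum_range_succ]
      abel
  refine ⟨φ, fun x y => ?_⟩
  obtain ⟨a, rfl⟩ := ex x
  obtain ⟨b, rfl⟩ := ex y
  rw [← pow_add, hφpow, hφpow, hφpow, hK3]
  simp only [hξ]
  rw [Finset.sum_range_add, Nat.cast_add, add_smul, Finset.sum_sub_distrib]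
  have : ∀ i, F (g ^ a * g ^ i) g = F (g ^ (a + i)) g := by intro i; rw [pow_add]
  rw [Finset.sum_congr rfl fun i _ => this i]
  abel

end Cyclic

section Prod2

/-- Decomposition of a 2-cocycle on a product: if the "commutator pairing" between
the two factors vanishes and the restrictions to the factors are coboundaries, the
cocycle is a coboundary. -/
lemma prod_coboundary {H₁ H₂ : Type*} [Group H₁] [Group H₂]
    (F : H₁ × H₂ → H₁ × H₂ → QmodZ) (hF : IsTwoCocycle F)
    (hsym : ∀ a b, F (1, b) (a, 1) = F (a, 1) (1, b))
    (h1 : IsTwoCoboundary (fun a b : H₁ => F (a, 1) (b, 1)))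
    (h2 : IsTwoCoboundary (fun a b : H₂ => F (1, a) (1, b))) : IsTwoCoboundary F := by
  obtain ⟨φ₁, hφ₁⟩ := h1
  obtain ⟨φ₂, hφ₂⟩ := h2
  refine ⟨fun x => φ₁ x.1 + φ₂ x.2 - F (x.1, 1) (1, x.2), ?_⟩
  rintro ⟨g₁, g₂⟩ ⟨h₁, h₂⟩
  have E1 := hF (g₁, 1) (1, g₂) (h₁, h₂)
  have E2 := hF (1, g₂) (h₁, 1) (1, h₂)
  have E3 := hF (h₁, 1) (1, g₂) (1, h₂)
  have E4 := hF (g₁, 1) (h₁, 1) (1, g₂ * h₂)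
  simp only [Prod.mk_mul_mk, one_mul, mul_one] at E1 E2 E3 E4 ⊢
  have B := hsym h₁ g₂
  have A1 : F (g₁, 1) (h₁, 1) = φ₁ g₁ + φ₁ h₁ - φ₁ (g₁ * h₁) := hφ₁ g₁ h₁
  have A2 : F (1, g₂) (1, h₂) = φ₂ g₂ + φ₂ h₂ - φ₂ (g₂ * h₂) := hφ₂ g₂ h₂
  have T1 : F (g₁, g₂) (h₁, h₂) =
      F (g₁, 1) (h₁, g₂ * h₂) + F (1, g₂) (h₁, h₂) - F (g₁, 1) (1, g₂) := by
    rw [← E1]; abel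
  have T4 : F (g₁, 1) (h₁, g₂ * h₂) =
      F (g₁, 1) (h₁, 1) + F (g₁ * h₁, 1) (1, g₂ * h₂) - F (h₁, 1) (1, g₂ * h₂) := by
    rw [E4]; abel
  have T2 : F (1, g₂) (h₁, h₂) =
      F (1, g₂) (h₁, 1) + F (h₁, g₂) (1, h₂) - F (h₁, 1) (1, h₂) := by
    rw [E2]; abel
  have T3 : F (h₁, g₂) (1, h₂) =
      F (h₁, 1) (1, g₂ * h₂) + F (1, g₂) (1, h₂) - F (h₁, 1) (1, g₂) := by
    rw [← E3]; abel
  rw [T1, T4, T2, T3, B, A1, A2]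
  abel

end Prod2

section GroupAux
open Subgroup

/-- Elements of a commutative group generated by two elements. -/
lemma mem_closure_pair {A : Type*} [CommGroup A] (u v x : A) :
    x ∈ closure ({u, v} : Set A) ↔ ∃ m n : ℤ, u ^ m * v ^ n = x := by
  set W : Subgroup A :=
    { carrier := {x | ∃ m n : ℤ, u ^ m * v ^ n = x}
      one_mem' := ⟨0, 0, by simp⟩
      mul_mem' := by
        rintro a b ⟨m, n, rfl⟩ ⟨m', n', rfl⟩
        exact ⟨m + m', n + n', by rw [_root_.zpow_add, _root_.zpow_add, mul_mul_mul_comm]⟩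
      inv_mem' := by
        rintro a ⟨m, n, rfl⟩
        exact ⟨-m, -n, by rw [_root_.zpow_neg, _root_.zpow_neg, _root_.mul_inv_rev, mul_comm]⟩ } with hW
  constructor
  · intro hx
    have hle : closure ({u, v} : Set A) ≤ W := by
      rw [closure_le]
      rintro y (rfl | rfl)
      · exact ⟨1, 0, by simp⟩
      · exact ⟨0, 1, by simp⟩
    exact hle hx
  · rintro ⟨m, n, rfl⟩
    exact mul_mem (zpow_mem (subset_closure (by simp)) m)
      (zpow_mem (subset_closure (by simp)) n)

/-- An internal decomposition into two subgroups gives an external product. -/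
lemma internal_prod {A : Type*} [CommGroup A] (X Y : Subgroup A)
    (hd : ∀ a : A, a ∈ X → a ∈ Y → a = 1)
    (hs : ∀ a : A, ∃ x ∈ X, ∃ y ∈ Y, x * y = a) : Nonempty (A ≃* (↥X × ↥Y)) := by
  let κ : ↥X × ↥Y →* A := (X.subtype).coprod (Y.subtype)
  have hκ : ∀ p : ↥X × ↥Y, κ p = (p.1 : A) * (p.2 : A) := fun p => rfl
  have hinj : Function.Injective κ := by
    rw [injective_iff_map_eq_one]
    rintro ⟨a, b⟩ hab
    rw [hκ] at hab
    have h1 : (a : A) = (↑b)⁻¹ := eq_inv_of_mul_eq_one_left hab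
    have h2 : (a : A) ∈ Y := h1 ▸ inv_mem b.2
    have h3 : (a : A) = 1 := hd a a.2 h2
    have h4 : (b : A) = 1 := by
      have := hab; rw [h3, one_mul] at this; exact this
    exact Prod.ext (Subtype.ext h3) (Subtype.ext h4)
  have hsur : Function.Surjective κ := by
    intro a
    obtain ⟨x, hx, y, hy, h⟩ := hs a
    exact ⟨(⟨x, hx⟩, ⟨y, hy⟩), h⟩
  exact ⟨(MulEquiv.ofBijective κ ⟨hinj, hsur⟩).symm⟩

/-- A product of two finite cyclic groups of coprime orders is cyclic. -/
lemma cyclic_prod {C D : Type*} [Group C] [Group D] [Finite C] [Finite D]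
    (hC : IsCyclic C) (hD : IsCyclic D) (h : Nat.Coprime (Nat.card C) (Nat.card D)) :
    IsCyclic (C × D) := by
  obtain ⟨c, hc⟩ := hC.exists_generator
  obtain ⟨d, hd⟩ := hD.exists_generator
  apply isCyclic_of_orderOf_eq_card (c, d)
  rw [Prod.orderOf_mk, orderOf_eq_card_of_forall_mem_zpowers hc,
    orderOf_eq_card_of_forall_mem_zpowers hd, Nat.card_prod,
    Nat.Coprime.lcm_eq_mul h]

end GroupAux

section CharExt

/-- Characters with values in `ℚ/ℤ` extend from subgroups: a consequence of
divisibility (injectivity) of `ℚ/ℤ`. -/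
lemma char_extend {A : Type*} [CommGroup A] (K : Subgroup A) (χ : ↥K → QmodZ)
    (hχ : ∀ a b : ↥K, χ (a * b) = χ a + χ b) :
    ∃ χ' : A → QmodZ, (∀ a b : A, χ' (a * b) = χ' a + χ' b) ∧ ∀ k : ↥K, χ' ↑k = χ k := by
  haveI : Fact ((0 : ℚ) < 1) := ⟨one_pos⟩
  have hb : Module.Baer ℤ QmodZ := Module.Baer.of_divisible _
  have h1 : χ 1 = 0 := by
    have h2 := hχ 1 1
    rw [one_mul] at h2
    exact (left_eq_add.mp h2)
  let g : Additive ↥K →+ QmodZ :=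
    { toFun := fun x => χ x.toMul
      map_zero' := h1
      map_add' := fun x y => hχ _ _ }
  let fmor : Additive ↥K →+ Additive A := MonoidHom.toAdditive K.subtype
  have hinj : Function.Injective fmor := fun a b hab => by
    have : (a.toMul : A) = (b.toMul : A) := congrArg Additive.toMul hab
    exact congrArg Additive.ofMul (Subtype.ext this)
  obtain ⟨h, hh⟩ := hb.extension_property_addMonoidHom fmor hinj g
  refine ⟨fun a => h (Additive.ofMul a), fun a b => by
    show h (Additive.ofMul (a * b)) = h (Additive.ofMul a) + h (Additive.ofMul b)
    rw [ofMul_mul, _root_.map_add], fun k => ?_⟩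
  have := DFunLike.congr_fun hh (Additive.ofMul k)
  exact this

end CharExt

section QmodZCoe

lemma qmodz_coe_sub (a b : ℚ) : ((a - b : ℚ) : QmodZ) = (a : QmodZ) - (b : QmodZ) :=
  _root_.map_sub (QuotientAddGroup.mk' (AddSubgroup.zmultiples (1 : ℚ))) a b

lemma qmodz_coe_add (a b : ℚ) : ((a + b : ℚ) : QmodZ) = (a : QmodZ) + (b : QmodZ) :=
  _root_.map_add (QuotientAddGroup.mk' (AddSubgroup.zmultiples (1 : ℚ))) a b

lemma qmodz_coe_nsmul (n : ℕ) (a : ℚ) : ((n • a : ℚ) : QmodZ) = n • (a : QmodZ) :=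
  _root_.map_nsmul (QuotientAddGroup.mk' (AddSubgroup.zmultiples (1 : ℚ))) n a

lemma qmodz_int (m : ℤ) : ((m : ℚ) : QmodZ) = 0 := by
  rw [AddCircle.coe_eq_zero_iff]
  exact ⟨m, by simp⟩

lemma qmodz_eq_zero_iff (r : ℚ) : (r : QmodZ) = 0 ↔ ∃ m : ℤ, (m : ℚ) = r := by
  rw [AddCircle.coe_eq_zero_iff]
  constructor
  · rintro ⟨m, hm⟩; exact ⟨m, by simpa using hm⟩
  · rintro ⟨m, hm⟩; exact ⟨m, by simpa using hm⟩

lemma qmodz_div_eq (e : ℕ) (he : 0 < e) (k l : ℤ) (h : (e : ℤ) ∣ k - l) :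
    (((k : ℚ) / (e : ℚ) : ℚ) : QmodZ) = (((l : ℚ) / (e : ℚ) : ℚ) : QmodZ) := by
  obtain ⟨m, hm⟩ := h
  have he' : (e : ℚ) ≠ 0 := by exact_mod_cast he.ne'
  have h1 : ((k : ℚ) / e - (l : ℚ) / e : ℚ) = (m : ℚ) := by
    rw [div_sub_div_same]
    have h0 : ((k : ℚ) - l) = ((k - l : ℤ) : ℚ) := by push_cast; ring
    rw [h0, hm]
    push_cast
    field_simp
  have h2 : (((k : ℚ) / e : ℚ) : QmodZ) - (((l : ℚ) / e : ℚ) : QmodZ) = 0 := by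
    rw [← qmodz_coe_sub, h1, qmodz_int]
  rw [sub_eq_zero] at h2
  exact h2

lemma qmodz_torsion (e : ℕ) (he : 0 < e) (q : QmodZ) (hq : e • q = 0) :
    ∃ k : ℤ, q = (((k : ℚ) / (e : ℚ) : ℚ) : QmodZ) := by
  obtain ⟨r, rfl⟩ := QuotientAddGroup.mk'_surjective _ q
  have he' : (e : ℚ) ≠ 0 := by exact_mod_cast he.ne'
  have h1 : ((e • r : ℚ) : QmodZ) = 0 := by
    rw [qmodz_coe_nsmul]; exact hq
  rw [AddCircle.coe_eq_zero_iff] at h1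
  obtain ⟨m, hm⟩ := h1
  refine ⟨m, ?_⟩
  have h2 : r = (m : ℚ) / e := by
    rw [eq_div_iff he', mul_comm]
    have : (e : ℚ) * r = (e : ℕ) • r := by simp [nsmul_eq_mul]
    rw [this]
    simpa using hm.symm
  exact congrArg _ h2

end QmodZCoe

section BigLemma
open Subgroup

/-- Key structure result: a finite commutative group generated by two elements
is bicyclic. -/
lemma two_gen_bicyclic_aux : ∀ (n : ℕ) (A : Type u) [CommGroup A] [Finite A],
    Nat.card A ≤ n → ∀ u v : A, Subgroup.closure ({u, v} : Set A) = ⊤ → IsBicyclic A := by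
  intro n
  induction n with
  | zero =>
    intro A _ _ hcard u v _
    have := Nat.card_pos (α := A)
    omega
  | succ n ih =>
    intro A _ _ hcard u v hgen
    by_cases hcyc : IsCyclic A
    · exact Or.inl hcyc
    have hee : Monoid.ExponentExists A := Monoid.ExponentExists.of_finite
    obtain ⟨x, hx⟩ := Monoid.exists_orderOf_eq_exponent hee
    set e := Monoid.exponent A with hedef
    have hepos : 0 < e := Monoid.exponent_pos.mpr hee
    have he2 : 2 ≤ e := by
      rcases Nat.lt_or_ge e 2 with h | h
      · exfalso
        have he1 : e = 1 := by omega
        have hall : ∀ a : A, a = 1 := fun a => by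
          have hpow := Monoid.pow_exponent_eq_one a
          rwa [← hedef, he1, pow_one] at hpow
        exact hcyc ⟨⟨1, fun a => by rw [hall a]; exact Subgroup.mem_zpowers 1⟩⟩
      · exact h
    classical
    have hxmem : ∀ w : ↥(zpowers x), ∃ k : ℤ, x ^ k = (w : A) :=
      fun w => Subgroup.mem_zpowers_iff.mp w.2
    set dl : ↥(zpowers x) → ℤ := fun w => Classical.choose (hxmem w) with hdl
    have hdl_spec : ∀ w, x ^ (dl w) = (w : A) := fun w => Classical.choose_spec (hxmem w)
    have hkey : ∀ k l : ℤ, x ^ k = x ^ l →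
        (((k : ℚ) / (e : ℚ) : ℚ) : QmodZ) = (((l : ℚ) / (e : ℚ) : ℚ) : QmodZ) := by
      intro k l hkl
      apply qmodz_div_eq e hepos
      have h2 := zpow_eq_zpow_iff_modEq.mp hkl
      rw [hx] at h2
      exact Int.ModEq.dvd h2.symm
    set χ : ↥(zpowers x) → QmodZ := fun w => (((dl w : ℚ) / (e : ℚ) : ℚ) : QmodZ) with hχdef
    have hχadd : ∀ a b : ↥(zpowers x), χ (a * b) = χ a + χ b := by
      intro a b
      have h1 : x ^ (dl (a * b)) = x ^ (dl a + dl b) := by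
        rw [hdl_spec, _root_.zpow_add, hdl_spec, hdl_spec]; rfl
      have h2 := hkey _ _ h1
      simp only [hχdef]
      rw [h2]
      push_cast
      rw [add_div, qmodz_coe_add]
    obtain ⟨χ', hχ'add, hχ'ext⟩ := char_extend (zpowers x) χ hχadd
    have hχ'1 : χ' 1 = 0 := by
      have h2 := hχ'add 1 1
      rw [one_mul] at h2
      exact left_eq_add.mp h2
    have hχ'inv : ∀ a : A, χ' a⁻¹ = - χ' a := by
      intro a
      have h2 := hχ'add a⁻¹ a
      rw [inv_mul_cancel, hχ'1] at h2
      exact eq_neg_of_add_eq_zero_left h2.symm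
    have hχ'pow : ∀ (a : A) (m : ℕ), χ' (a ^ m) = m • χ' a := by
      intro a m
      induction m with
      | zero => simpa using hχ'1
      | succ m ihm => rw [pow_succ, hχ'add, ihm, succ_nsmul]
    set B : Subgroup A :=
      { carrier := {a | χ' a = 0}
        one_mem' := hχ'1
        mul_mem' := fun ha hb => by
          simp only [Set.mem_setOf_eq] at *
          rw [hχ'add]
          rw [ha, hb, add_zero]
        inv_mem' := fun ha => by
          simp only [Set.mem_setOf_eq] at *
          rw [hχ'inv]
          rw [ha, neg_zero] } with hBdef
    have hBmem : ∀ a : A, a ∈ B ↔ χ' a = 0 := fun a => Iff.rfl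
    have hdisj : ∀ a : A, a ∈ zpowers x → a ∈ B → a = 1 := by
      intro a ha hb
      have h1 : χ' a = χ ⟨a, ha⟩ := hχ'ext ⟨a, ha⟩
      rw [(hBmem a).mp hb] at h1
      have h2 : ∃ m : ℤ, (m : ℚ) = (dl ⟨a, ha⟩ : ℚ) / e := by
        rw [← qmodz_eq_zero_iff]
        exact h1.symm
      obtain ⟨m, hm⟩ := h2
      have he' : (e : ℚ) ≠ 0 := by exact_mod_cast hepos.ne'
      have h3 : (dl ⟨a, ha⟩ : ℚ) = (m : ℚ) * e := (div_eq_iff he').mp hm.symm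
      have h4 : dl ⟨a, ha⟩ = m * e := by exact_mod_cast h3
      have h5 : x ^ (dl ⟨a, ha⟩) = a := hdl_spec ⟨a, ha⟩
      rw [h4] at h5
      have h6 : x ^ (e : ℤ) = 1 := by
        rw [_root_.zpow_natCast, ← hx, pow_orderOf_eq_one]
      rw [← h5, mul_comm m (e : ℤ), _root_.zpow_mul, h6, _root_.one_zpow]
    have hχ'zpow : ∀ k : ℤ, χ' (x ^ k) = (((k : ℚ) / (e : ℚ) : ℚ) : QmodZ) := by
      intro k
      have hmem : x ^ k ∈ zpowers x := zpow_mem (mem_zpowers x) k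
      have h3 : χ' (x ^ k) = χ ⟨x ^ k, hmem⟩ := hχ'ext ⟨x ^ k, hmem⟩
      rw [h3]
      simp only [hχdef]
      exact hkey _ _ (hdl_spec ⟨x ^ k, hmem⟩)
    have hspan : ∀ a : A, ∃ w ∈ zpowers x, ∃ b ∈ B, w * b = a := by
      intro a
      have h1 : (e : ℕ) • χ' a = 0 := by
        rw [← hχ'pow]
        have h0 : a ^ e = 1 := Monoid.pow_exponent_eq_one a
        rw [h0, hχ'1]
      obtain ⟨k, hk⟩ := qmodz_torsion e hepos _ h1
      refine ⟨x ^ k, zpow_mem (mem_zpowers x) k, (x ^ k)⁻¹ * a, ?_, by group⟩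
      show χ' ((x ^ k)⁻¹ * a) = 0
      rw [hχ'add, hχ'inv, hχ'zpow, hk]
      exact neg_add_cancel _
    obtain ⟨eqv⟩ := internal_prod (zpowers x) B hdisj hspan
    have zcyc : IsCyclic ↥(zpowers x) := by
      refine ⟨⟨⟨x, mem_zpowers x⟩, fun w => ?_⟩⟩
      refine Subgroup.mem_zpowers_iff.mpr ⟨dl w, ?_⟩
      apply Subtype.ext
      rw [SubgroupClass.coe_zpow]
      exact hdl_spec w
    have done : IsCyclic ↥B → IsBicyclic A := fun hBc =>
      Or.inr ⟨↥(zpowers x), ↥B, inferInstance, inferInstance, zcyc, hBc, ⟨eqv⟩⟩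
    have hcardA : Nat.card A = e * Nat.card ↥B := by
      rw [Nat.card_congr eqv.toEquiv, Nat.card_prod, Nat.card_zpowers, hx]
    have hBpos : 0 < Nat.card ↥B := Nat.card_pos
    have hBle : Nat.card ↥B ≤ n := by
      have h7 : 2 * Nat.card ↥B ≤ Nat.card A := by
        rw [hcardA]
        exact Nat.mul_le_mul_right _ he2
      omega
    -- B is generated by two elements, via the isomorphism with A ⧸ zpowers x
    let π : A →* A ⧸ zpowers x := QuotientGroup.mk' (zpowers x)
    let ι : ↥B →* A ⧸ zpowers x := π.comp B.subtype
    have hιinj : Function.Injective ι := by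
      rw [injective_iff_map_eq_one]
      intro b hb
      have h1 : (b : A) ∈ zpowers x := (QuotientGroup.eq_one_iff _).mp hb
      exact Subtype.ext (hdisj _ h1 b.2)
    have hιsur : Function.Surjective ι := by
      intro q
      obtain ⟨a, rfl⟩ := QuotientGroup.mk'_surjective (zpowers x) q
      obtain ⟨w, hw, b, hb, hwb⟩ := hspan a
      refine ⟨⟨b, hb⟩, ?_⟩
      show π b = π a
      rw [QuotientGroup.mk'_eq_mk']
      exact ⟨w, hw, by rw [mul_comm]; exact hwb⟩
    let eB : ↥B ≃* A ⧸ zpowers x := MulEquiv.ofBijective ι ⟨hιinj, hιsur⟩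
    have hQgen : closure ({π u, π v} : Set (A ⧸ zpowers x)) = ⊤ := by
      have h1 := MonoidHom.map_closure π ({u, v} : Set A)
      rw [hgen, Set.image_pair] at h1
      rw [← h1, Subgroup.map_top_of_surjective _ (QuotientGroup.mk'_surjective _)]
    have hBgen : closure ({eB.symm (π u), eB.symm (π v)} : Set ↥B) = ⊤ := by
      apply Subgroup.map_injective (f := eB.toMonoidHom) eB.injective
      rw [MonoidHom.map_closure, Set.image_pair,
        Subgroup.map_top_of_surjective eB.toMonoidHom (fun y => ⟨eB.symm y, by simp⟩)]
      simp only [MulEquiv.coe_toMonoidHom, MulEquiv.apply_symm_apply]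
      exact hQgen
    have hbic := ih (↥B) hBle (eB.symm (π u)) (eB.symm (π v)) hBgen
    rcases hbic with hBc | ⟨C, D, gC, gD, hCc, hDc, ⟨eCD⟩⟩
    · exact done hBc
    haveI : Finite (C × D) := Finite.of_equiv _ eCD.toEquiv
    haveI : Finite C := Finite.of_injective (fun c => ((c, 1) : C × D))
      (fun a b h => (Prod.ext_iff.mp h).1)
    haveI : Finite D := Finite.of_injective (fun d => ((1, d) : C × D))
      (fun a b h => (Prod.ext_iff.mp h).2)
    by_cases hco : Nat.Coprime (Nat.card C) (Nat.card D)
    · haveI := cyclic_prod hCc hDc hco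
      exact done (isCyclic_of_surjective eCD.symm eCD.symm.surjective)
    exfalso
    set g0 := Nat.gcd (Nat.card C) (Nat.card D) with hg0
    have hg1 : g0 ≠ 1 := hco
    set p := g0.minFac with hpd
    have hp : p.Prime := Nat.minFac_prime hg1
    have hpC : p ∣ Nat.card C := dvd_trans (Nat.minFac_dvd g0) (Nat.gcd_dvd_left _ _)
    have hpD : p ∣ Nat.card D := dvd_trans (Nat.minFac_dvd g0) (Nat.gcd_dvd_right _ _)
    haveI := Fact.mk hp
    haveI := Fintype.ofFinite C
    haveI := Fintype.ofFinite D
    obtain ⟨c, hcord⟩ := exists_prime_orderOf_dvd_card (G := C) p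
      (by rwa [← Nat.card_eq_fintype_card])
    obtain ⟨d, hdord⟩ := exists_prime_orderOf_dvd_card (G := D) p
      (by rwa [← Nat.card_eq_fintype_card])
    set YB : ↥B := eCD.symm (c, 1) with hYBdef
    set ZB : ↥B := eCD.symm (1, d) with hZBdef
    have hordsymm : ∀ z : C × D, orderOf (eCD.symm z) = orderOf z := by
      intro z
      have := orderOf_injective eCD.symm.toMonoidHom eCD.symm.injective z
      simpa using this
    have hYord : orderOf (YB : A) = p := by
      rw [orderOf_coe, hYBdef, hordsymm, Prod.orderOf_mk, orderOf_one, Nat.lcm_one_right, hcord]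
    have hZord : orderOf (ZB : A) = p := by
      rw [orderOf_coe, hZBdef, hordsymm, Prod.orderOf_mk, orderOf_one, Nat.lcm_one_left, hdord]
    have hpe : p ∣ e := hYord ▸ Monoid.order_dvd_exponent (YB : A)
    set X : A := x ^ (e / p) with hXdef
    have hXord : orderOf X = p := by
      rw [hXdef, orderOf_pow, hx, Nat.gcd_eq_right (Nat.div_dvd_of_dvd hpe),
        Nat.div_div_self hpe hepos.ne']
    have hXmem : X ∈ zpowers x := pow_mem (mem_zpowers x) _
    set P : A →* A := powMonoidHom p with hPdef
    set T := P.ker with hTdef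
    set R := P.range with hRdef
    have hTmem : ∀ a : A, a ∈ T ↔ a ^ p = 1 := fun a => Iff.rfl
    have huniq : ∀ w w' b b' : A, w ∈ zpowers x → w' ∈ zpowers x → b ∈ B → b' ∈ B →
        w * b = w' * b' → w = w' ∧ b = b' := by
      intro w w' b b' hw hw' hb hb' hh
      have h1 : w'⁻¹ * w = b' * b⁻¹ := by
        calc w'⁻¹ * w = w'⁻¹ * (w * b) * b⁻¹ := by group
        _ = w'⁻¹ * (w' * b') * b⁻¹ := by rw [hh]
        _ = b' * b⁻¹ := by group
      have h2 : w'⁻¹ * w ∈ zpowers x := mul_mem (inv_mem hw') hw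
      have h3 : w'⁻¹ * w ∈ B := by rw [h1]; exact mul_mem hb' (inv_mem hb)
      have h4 : w'⁻¹ * w = 1 := hdisj _ h2 h3
      have h5 : w = w' := (inv_mul_eq_one.mp h4).symm
      refine ⟨h5, ?_⟩
      rw [h5] at hh
      exact mul_left_cancel hh
    have hXp1 : X ^ p = 1 := by rw [← hXord]; exact pow_orderOf_eq_one X
    have hTclosed : ∀ i j k : ℕ, X ^ i * ((YB ^ j * ZB ^ k : ↥B) : A) ∈ T := by
      intro i j k
      rw [hTmem]
      have hYp : (YB : A) ^ p = 1 := by rw [← hYord]; exact pow_orderOf_eq_one _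
      have hZp : (ZB : A) ^ p = 1 := by rw [← hZord]; exact pow_orderOf_eq_one _
      have hcoe : ((YB ^ j * ZB ^ k : ↥B) : A) = (YB : A) ^ j * (ZB : A) ^ k := by
        push_cast; rfl
      rw [hcoe, mul_pow, mul_pow, pow_right_comm X, pow_right_comm (YB : A),
        pow_right_comm (ZB : A), hXp1, hYp, hZp, one_pow, one_pow, one_pow,
        one_mul, one_mul]
    set m3 : Fin p × Fin p × Fin p → ↥T := fun t =>
      ⟨X ^ (t.1 : ℕ) * ((YB ^ (t.2.1 : ℕ) * ZB ^ (t.2.2 : ℕ) : ↥B) : A), hTclosed _ _ _⟩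
      with hm3def
    have hmape : ∀ j k : ℕ, eCD (YB ^ j * ZB ^ k) = (c ^ j, d ^ k) := by
      intro j k
      rw [_root_.map_mul, _root_.map_pow, _root_.map_pow, hYBdef, hZBdef,
        MulEquiv.apply_symm_apply, MulEquiv.apply_symm_apply]
      simp [Prod.ext_iff]
    have hm3inj : Function.Injective m3 := by
      rintro ⟨i, j, k⟩ ⟨i', j', k'⟩ h
      have h0 := Subtype.ext_iff.mp h
      simp only [hm3def] at h0
      have h1 := huniq _ _ _ _ (pow_mem hXmem _) (pow_mem hXmem _)
        (YB ^ (j : ℕ) * ZB ^ (k : ℕ)).2 (YB ^ (j' : ℕ) * ZB ^ (k' : ℕ)).2 h0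
      have hii : (i : ℕ) = (i' : ℕ) := by
        have h2 := pow_eq_pow_iff_modEq.mp h1.1
        rw [hXord] at h2
        rw [Nat.ModEq, Nat.mod_eq_of_lt i.isLt, Nat.mod_eq_of_lt i'.isLt] at h2
        exact h2
      have hB2 : YB ^ (j : ℕ) * ZB ^ (k : ℕ) = YB ^ (j' : ℕ) * ZB ^ (k' : ℕ) :=
        Subtype.ext h1.2
      have h3 := congrArg eCD hB2
      rw [hmape, hmape] at h3
      have hcc : c ^ (j : ℕ) = c ^ (j' : ℕ) := (Prod.ext_iff.mp h3).1
      have hdd : d ^ (k : ℕ) = d ^ (k' : ℕ) := (Prod.ext_iff.mp h3).2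
      have hjj : (j : ℕ) = (j' : ℕ) := by
        have h2 := pow_eq_pow_iff_modEq.mp hcc
        rw [hcord, Nat.ModEq, Nat.mod_eq_of_lt j.isLt, Nat.mod_eq_of_lt j'.isLt] at h2
        exact h2
      have hkk : (k : ℕ) = (k' : ℕ) := by
        have h2 := pow_eq_pow_iff_modEq.mp hdd
        rw [hdord, Nat.ModEq, Nat.mod_eq_of_lt k.isLt, Nat.mod_eq_of_lt k'.isLt] at h2
        exact h2
      exact Prod.ext (Fin.ext hii) (Prod.ext (Fin.ext hjj) (Fin.ext hkk))
    have hcount1 : p * (p * p) ≤ Nat.card ↥T := by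
      have h1 := Nat.card_le_card_of_injective m3 hm3inj
      rwa [Nat.card_prod, Nat.card_prod, Nat.card_eq_fintype_card (α := Fin p),
        Fintype.card_fin] at h1
    -- |T| = |A ⧸ R|
    have hTR : Nat.card ↥T = Nat.card (A ⧸ R) := by
      have h1 : Nat.card A = Nat.card (A ⧸ T) * Nat.card ↥T :=
        Subgroup.card_eq_card_quotient_mul_card_subgroup T
      have h2 : Nat.card A = Nat.card (A ⧸ R) * Nat.card ↥R :=
        Subgroup.card_eq_card_quotient_mul_card_subgroup R
      have h3 : Nat.card (A ⧸ T) = Nat.card ↥R :=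
        Nat.card_congr (QuotientGroup.quotientKerEquivRange P).toEquiv
      have hRpos : 0 < Nat.card ↥R := Nat.card_pos
      have h4 : Nat.card ↥R * Nat.card ↥T = Nat.card ↥R * Nat.card (A ⧸ R) := by
        calc Nat.card ↥R * Nat.card ↥T = Nat.card (A ⧸ T) * Nat.card ↥T := by rw [h3]
        _ = Nat.card A := h1.symm
        _ = Nat.card (A ⧸ R) * Nat.card ↥R := h2
        _ = Nat.card ↥R * Nat.card (A ⧸ R) := mul_comm _ _
      exact Nat.eq_of_mul_eq_mul_left hRpos h4
    -- surjection (Fin p)² → A ⧸ R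
    have hppos : (0 : ℤ) < (p : ℤ) := by exact_mod_cast hp.pos
    set πR : A →* A ⧸ R := QuotientGroup.mk' R with hπRdef
    have hred : ∀ (z : A) (m : ℤ), πR z ^ m = πR z ^ ((m % (p : ℤ)).toNat : ℕ) := by
      intro z m
      have hz : πR z ^ (p : ℤ) = 1 := by
        rw [← _root_.map_zpow]
        rw [show (QuotientGroup.mk' R) (z ^ (p : ℤ)) = 1 ↔ z ^ (p : ℤ) ∈ R from
          QuotientGroup.eq_one_iff _]
        rw [_root_.zpow_natCast]
        exact ⟨z, rfl⟩
      conv_lhs => rw [← Int.emod_add_mul_ediv m (p : ℤ)]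
      rw [_root_.zpow_add, _root_.zpow_mul, hz, _root_.one_zpow, mul_one, ← _root_.zpow_natCast,
        Int.toNat_of_nonneg (Int.emod_nonneg _ hppos.ne')]
    have hsurj2 : Function.Surjective
        (fun t : Fin p × Fin p => πR u ^ (t.1 : ℕ) * πR v ^ (t.2 : ℕ)) := by
      intro q
      obtain ⟨a, rfl⟩ := QuotientGroup.mk'_surjective R q
      have ha : a ∈ closure ({u, v} : Set A) := by rw [hgen]; exact mem_top a
      obtain ⟨m', n', hmn⟩ := (mem_closure_pair u v a).mp ha
      refine ⟨(⟨(m' % (p : ℤ)).toNat, ?_⟩, ⟨(n' % (p : ℤ)).toNat, ?_⟩), ?_⟩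
      · exact (Int.toNat_lt (Int.emod_nonneg _ hppos.ne')).mpr (Int.emod_lt_of_pos _ hppos)
      · exact (Int.toNat_lt (Int.emod_nonneg _ hppos.ne')).mpr (Int.emod_lt_of_pos _ hppos)
      · show πR u ^ ((m' % (p : ℤ)).toNat : ℕ) * πR v ^ ((n' % (p : ℤ)).toNat : ℕ) = πR a
        rw [← hred, ← hred, ← _root_.map_zpow, ← _root_.map_zpow, ← _root_.map_mul, hmn]
    have hcount2 : Nat.card (A ⧸ R) ≤ p * p := by
      have h1 := Nat.card_le_card_of_surjective _ hsurj2
      rwa [Nat.card_prod, Nat.card_eq_fintype_card (α := Fin p), Fintype.card_fin] at h1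
    have hpp4 : 4 ≤ p * p := Nat.mul_le_mul hp.two_le hp.two_le
    have hfinal : 2 * (p * p) ≤ p * (p * p) := Nat.mul_le_mul_right _ hp.two_le
    omega

end BigLemma

section BicyclicAux
open Subgroup

lemma bicyclic_transport {A B : Type u} [Group A] [Group B] (e : A ≃* B)
    (h : IsBicyclic A) : IsBicyclic B := by
  rcases h with h | ⟨X, Y, gX, gY, hX, hY, ⟨i⟩⟩
  · exact Or.inl (isCyclic_of_surjective e e.surjective)
  · exact Or.inr ⟨X, Y, gX, gY, hX, hY, ⟨e.symm.trans i⟩⟩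

lemma bicyclic_comm {A : Type u} [Group A] (h : IsBicyclic A) :
    ∀ a b : A, a * b = b * a := by
  rcases h with h | ⟨X, Y, gX, gY, hX, hY, ⟨i⟩⟩
  · haveI := h
    letI := IsCyclic.commGroup (α := A)
    exact fun a b => mul_comm a b
  · intro a b
    haveI := hX; haveI := hY
    letI := IsCyclic.commGroup (α := X)
    letI := IsCyclic.commGroup (α := Y)
    apply i.injective
    rw [_root_.map_mul, _root_.map_mul, mul_comm]

/-- A finite group in which two elements commute: they generate a bicyclic
(abelian, 2-generated) subgroup. -/
lemma exists_bicyclic_containing {G : Type u} [Group G] [Finite G] {u v : G}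
    (huv : u * v = v * u) :
    ∃ A : Subgroup G, u ∈ A ∧ v ∈ A ∧ IsBicyclic ↥A := by
  set S : Set G := {u, v} with hS
  have hSc : ∀ a ∈ S, ∀ b ∈ S, b * a = a * b := by
    rintro a (rfl | rfl) b (rfl | rfl)
    · rfl
    · exact huv.symm
    · exact huv
    · rfl
  have hle : closure S ≤ Subgroup.centralizer S := by
    rw [closure_le]
    intro a ha
    rw [SetLike.mem_coe, mem_centralizer_iff]
    exact fun b hb => hSc a ha b hb
  have hle2 : closure S ≤ Subgroup.centralizer (closure S : Set G) := by
    rw [closure_le]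
    intro a ha
    rw [SetLike.mem_coe, mem_centralizer_iff]
    intro b hb
    have := hle hb
    rw [mem_centralizer_iff] at this
    exact (this a ha).symm
  have hcomm : ∀ a b : ↥(closure S), a * b = b * a := by
    intro a b
    apply Subtype.ext
    have := hle2 b.2
    rw [mem_centralizer_iff] at this
    exact (this (a : G) a.2)
  letI cg : CommGroup ↥(closure S) :=
    { (inferInstance : Group ↥(closure S)) with mul_comm := hcomm }
  have humem : u ∈ closure S := subset_closure (by simp [hS])
  have hvmem : v ∈ closure S := subset_closure (by simp [hS])
  have hgen : closure ({⟨u, humem⟩, ⟨v, hvmem⟩} : Set ↥(closure S)) = ⊤ := by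
    apply Subgroup.map_injective (closure S).subtype_injective
    rw [MonoidHom.map_closure, Set.image_pair, ← MonoidHom.range_eq_map,
      Subgroup.subtype_range]
    have h1 : (closure S).subtype ⟨u, humem⟩ = u := rfl
    have h2 : (closure S).subtype ⟨v, hvmem⟩ = v := rfl
    rw [h1, h2, hS]
  have hbic : IsBicyclic ↥(closure S) :=
    two_gen_bicyclic_aux (Nat.card ↥(closure S)) ↥(closure S) le_rfl _ _ hgen
  exact ⟨closure S, humem, hvmem, hbic⟩

end BicyclicAux

section SymCob

/-- A symmetric 2-cocycle on a bicyclic finite group is a coboundary. -/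
lemma sym_coboundary_of_bicyclic {H : Type u} [Group H] [Finite H] (hb : IsBicyclic H)
    (f : H → H → QmodZ) (hf : IsTwoCocycle f) (hsym : ∀ a b : H, f a b = f b a) :
    IsTwoCoboundary f := by
  rcases hb with hc | ⟨B, C, gB, gC, hBc, hCc, ⟨e⟩⟩
  · exact cyclic_coboundary hc f hf
  · haveI : Finite (B × C) := Finite.of_equiv _ e.toEquiv
    haveI : Finite B := Finite.of_injective (fun b => ((b, 1) : B × C))
      (fun a b h => (Prod.ext_iff.mp h).1)
    haveI : Finite C := Finite.of_injective (fun c => ((1, c) : B × C))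
      (fun a b h => (Prod.ext_iff.mp h).2)
    set F : B × C → B × C → QmodZ := fun x y => f (e.symm x) (e.symm y) with hFdef
    have hFc : IsTwoCocycle F := by
      intro g h k
      simp only [hFdef]
      rw [_root_.map_mul, _root_.map_mul]
      exact hf _ _ _
    have hFcob : IsTwoCoboundary F := by
      apply prod_coboundary F hFc
      · intro a b; exact hsym _ _
      · have hc1 : IsTwoCocycle (fun a b : B => F (a, 1) (b, 1)) :=
          cocycle_comp (MonoidHom.inl B C) hFc
        exact cyclic_coboundary hBc _ hc1
      · have hc2 : IsTwoCocycle (fun a b : C => F (1, a) (1, b)) :=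
          cocycle_comp (MonoidHom.inr B C) hFc
        exact cyclic_coboundary hCc _ hc2
    obtain ⟨φ, hφ⟩ := hFcob
    refine ⟨fun h => φ (e h), fun a b => ?_⟩
    have h1 : F (e a) (e b) = φ (e a) + φ (e b) - φ (e a * e b) := hφ (e a) (e b)
    simp only [hFdef, MulEquiv.symm_apply_apply] at h1
    rw [← _root_.map_mul] at h1
    exact h1

/-- The bicyclic-restriction hypothesis implies symmetry on commuting pairs. -/
lemma cocycle_symm_of_hyp {G : Type u} [Group G] [Finite G] (f : G → G → QmodZ)
    (hbic : ∀ A : Subgroup G, IsBicyclic ↥A → IsTwoCoboundary (fun a b : ↥A => f ↑a ↑b))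
    {u v : G} (huv : u * v = v * u) : f u v = f v u := by
  obtain ⟨A, hu, hv, hb⟩ := exists_bicyclic_containing huv
  obtain ⟨φ, hφ⟩ := hbic A hb
  have h3 : (⟨u, hu⟩ * ⟨v, hv⟩ : ↥A) = ⟨v, hv⟩ * ⟨u, hu⟩ := Subtype.ext huv
  have h1 : f u v = φ ⟨u, hu⟩ + φ ⟨v, hv⟩ - φ (⟨u, hu⟩ * ⟨v, hv⟩ : ↥A) :=
    hφ ⟨u, hu⟩ ⟨v, hv⟩
  have h2 : f v u = φ ⟨v, hv⟩ + φ ⟨u, hu⟩ - φ (⟨v, hv⟩ * ⟨u, hu⟩ : ↥A) :=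
    hφ ⟨v, hv⟩ ⟨u, hu⟩
  rw [h1, h2, h3]
  abel

/-- Conversely, symmetry on commuting pairs gives the bicyclic-restriction hypothesis. -/
lemma hyp_of_symm {G : Type u} [Group G] [Finite G] (f : G → G → QmodZ)
    (hf : IsTwoCocycle f) (hsym : ∀ u v : G, u * v = v * u → f u v = f v u)
    (A : Subgroup G) (hA : IsBicyclic ↥A) :
    IsTwoCoboundary (fun a b : ↥A => f ↑a ↑b) := by
  have hcomm := bicyclic_comm hA
  have hc : IsTwoCocycle (fun a b : ↥A => f ↑a ↑b) := cocycle_comp A.subtype hf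
  apply sym_coboundary_of_bicyclic hA _ hc
  intro a b
  exact hsym _ _ (congrArg Subtype.val (hcomm a b))

end SymCob

theorem B0_central_product (G₁ G₂ : Type u) [Group G₁] [Group G₂] [Finite G₁] [Finite G₂]
    (K₁ : Subgroup G₁) (K₂ : Subgroup G₂)
    (hK₁ : K₁ ≤ Subgroup.center G₁) (hK₂ : K₂ ≤ Subgroup.center G₂)
    (θ : G₁ →* G₂) (hinj : Set.InjOn θ K₁) (hsurj : Subgroup.map θ K₁ = K₂)
    (N : Subgroup (G₁ × G₂)) (hNormalN : N.Normal) (hNormalK : K₁.Normal)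
    (hN : (N : Set (G₁ × G₂)) = {x | ∃ a ∈ K₁, x = (a, (θ a)⁻¹)}) :
    haveI := hNormalN
    haveI := hNormalK
    BogomolovMultiplierTrivial (G₁ ⧸ K₁) → BogomolovMultiplierTrivial G₁ →
      BogomolovMultiplierTrivial G₂ → BogomolovMultiplierTrivial ((G₁ × G₂) ⧸ N) := by
  haveI := hNormalN
  haveI := hNormalK
  intro hQ hB1 hB2 f hf hbic
  haveI : Finite ((G₁ × G₂) ⧸ N) := Quotient.finite _
  haveI : Finite (G₁ ⧸ K₁) := Quotient.finite _
  -- normalize f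
  apply coboundary_add_const (c := f 1 1)
  set fn : ((G₁ × G₂) ⧸ N) → ((G₁ × G₂) ⧸ N) → QmodZ := fun x y => f x y - f 1 1 with hfndef
  have hfnc : IsTwoCocycle fn := cocycle_sub_const hf _
  have hfn1 : ∀ x, fn 1 x = 0 := fun x => by
    simp only [hfndef]; rw [cocycle_one_left hf, sub_self]
  have hfn1' : ∀ x, fn x 1 = 0 := fun x => by
    simp only [hfndef]; rw [cocycle_one_right hf, sub_self]
  have hbicn : ∀ A : Subgroup ((G₁ × G₂) ⧸ N), IsBicyclic ↥A →
      IsTwoCoboundary (fun a b : ↥A => fn ↑a ↑b) := by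
    intro A hA
    exact coboundary_sub_const _ (hbic A hA)
  have hsymm : ∀ u v : ((G₁ × G₂) ⧸ N), u * v = v * u → fn u v = fn v u :=
    fun u v huv => cocycle_symm_of_hyp fn hbicn huv
  set π : (G₁ × G₂) →* (G₁ × G₂) ⧸ N := QuotientGroup.mk' N with hπdef
  have hπsur : Function.Surjective π := QuotientGroup.mk'_surjective N
  have hπN : ∀ x ∈ N, π x = 1 := fun x hx => (QuotientGroup.eq_one_iff x).mpr hx
  have hNmem : ∀ x : G₁ × G₂, x ∈ N ↔ ∃ a ∈ K₁, x = (a, (θ a)⁻¹) := by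
    intro x
    rw [← SetLike.mem_coe, hN]
    rfl
  set ι₁ : G₁ →* (G₁ × G₂) ⧸ N := π.comp (MonoidHom.inl G₁ G₂) with hι₁def
  set ι₂ : G₂ →* (G₁ × G₂) ⧸ N := π.comp (MonoidHom.inr G₁ G₂) with hι₂def
  have hι₁inj : Function.Injective ι₁ := by
    rw [injective_iff_map_eq_one]
    intro g hg
    have h1 : ((g, 1) : G₁ × G₂) ∈ N := (QuotientGroup.eq_one_iff _).mp hg
    obtain ⟨a, ha, h2⟩ := (hNmem _).mp h1
    have h3 : g = a := (Prod.ext_iff.mp h2).1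
    have h4 : (1 : G₂) = (θ a)⁻¹ := (Prod.ext_iff.mp h2).2
    have h5 : θ a = 1 := by rw [← inv_eq_one, ← h4]
    have h6 : θ a = θ 1 := by rw [h5, _root_.map_one]
    have h7 : a = 1 := hinj ha (one_mem K₁) h6
    rw [h3, h7]
  have hι₂inj : Function.Injective ι₂ := by
    rw [injective_iff_map_eq_one]
    intro g hg
    have h1 : ((1, g) : G₁ × G₂) ∈ N := (QuotientGroup.eq_one_iff _).mp hg
    obtain ⟨a, ha, h2⟩ := (hNmem _).mp h1
    have h3 : (1 : G₁) = a := (Prod.ext_iff.mp h2).1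
    have h4 : g = (θ a)⁻¹ := (Prod.ext_iff.mp h2).2
    rw [h4, ← h3, _root_.map_one, inv_one]
  set F : (G₁ × G₂) → (G₁ × G₂) → QmodZ := fun x y => fn (π x) (π y) with hFdef
  have hFc : IsTwoCocycle F := cocycle_comp π hfnc
  -- restrictions to the factors are coboundaries
  have hF1cob : IsTwoCoboundary (fun a b : G₁ => F (a, 1) (b, 1)) := by
    refine hB1 _ (cocycle_comp (MonoidHom.inl G₁ G₂) hFc) ?_
    intro A hA
    set eqi : ↥A ≃* ↥(Subgroup.map ι₁ A) := Subgroup.equivMapOfInjective A ι₁ hι₁inj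
      with heqidef
    have hTb : IsBicyclic ↥(Subgroup.map ι₁ A) := bicyclic_transport eqi hA
    obtain ⟨φ, hφ⟩ := hbicn _ hTb
    refine ⟨fun a => φ (eqi a), fun a b => ?_⟩
    have h2 : ∀ c : ↥A, ((eqi c : ↥(Subgroup.map ι₁ A)) : (G₁ × G₂) ⧸ N) = ι₁ ↑c := by
      intro c
      rw [heqidef]
      exact Subgroup.coe_equivMapOfInjective_apply A ι₁ hι₁inj c
    have h1 : fn ↑(eqi a) ↑(eqi b) = φ (eqi a) + φ (eqi b) - φ (eqi a * eqi b) := hφ _ _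
    rw [h2 a, h2 b, ← _root_.map_mul] at h1
    exact h1
  have hF2cob : IsTwoCoboundary (fun a b : G₂ => F (1, a) (1, b)) := by
    refine hB2 _ (cocycle_comp (MonoidHom.inr G₁ G₂) hFc) ?_
    intro A hA
    set eqi : ↥A ≃* ↥(Subgroup.map ι₂ A) := Subgroup.equivMapOfInjective A ι₂ hι₂inj
      with heqidef
    have hTb : IsBicyclic ↥(Subgroup.map ι₂ A) := bicyclic_transport eqi hA
    obtain ⟨φ, hφ⟩ := hbicn _ hTb
    refine ⟨fun a => φ (eqi a), fun a b => ?_⟩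
    have h2 : ∀ c : ↥A, ((eqi c : ↥(Subgroup.map ι₂ A)) : (G₁ × G₂) ⧸ N) = ι₂ ↑c := by
      intro c
      rw [heqidef]
      exact Subgroup.coe_equivMapOfInjective_apply A ι₂ hι₂inj c
    have h1 : fn ↑(eqi a) ↑(eqi b) = φ (eqi a) + φ (eqi b) - φ (eqi a * eqi b) := hφ _ _
    rw [h2 a, h2 b, ← _root_.map_mul] at h1
    exact h1
  have hsymE : ∀ (a : G₁) (b : G₂), F (1, b) (a, 1) = F (a, 1) (1, b) := by
    intro a b
    have hcc : π ((1 : G₁), b) * π (a, (1 : G₂)) = π (a, 1) * π (1, b) := by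
      rw [← _root_.map_mul, ← _root_.map_mul]
      congr 1
      simp
    exact hsymm _ _ hcc
  obtain ⟨ψ, hψ⟩ := prod_coboundary F hFc hsymE hF1cob hF2cob
  have hFN1 : ∀ (x nn : G₁ × G₂), nn ∈ N → F nn x = 0 := by
    intro x nn hn
    show fn (π nn) (π x) = 0
    rw [hπN nn hn]
    exact hfn1 _
  have hψmulN : ∀ nn e : G₁ × G₂, nn ∈ N → ψ (nn * e) = ψ nn + ψ e := by
    intro nn e hn
    have h1 := hψ nn e
    rw [hFN1 e nn hn] at h1
    exact (sub_eq_zero.mp h1.symm).symm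
  set μ : G₁ → QmodZ := fun a => ψ (a, (θ a)⁻¹) with hμdef
  have hμadd : ∀ a ∈ K₁, ∀ b ∈ K₁, μ (a * b) = μ a + μ b := by
    intro a ha b hb
    have hcm : Commute (θ a) (θ b) := by
      show θ a * θ b = θ b * θ a
      rw [← _root_.map_mul, ← _root_.map_mul]
      congr 1
      have hc := hK₁ ha
      rw [Subgroup.mem_center_iff] at hc
      exact (hc b).symm
    have hab : ((a, (θ a)⁻¹) : G₁ × G₂) * (b, (θ b)⁻¹) = ((a * b, (θ (a * b))⁻¹) : G₁ × G₂) := by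
      rw [Prod.mk_mul_mk]
      refine Prod.ext rfl ?_
      show (θ a)⁻¹ * (θ b)⁻¹ = (θ (a * b))⁻¹
      rw [_root_.map_mul, _root_.mul_inv_rev]
      exact hcm.inv_inv.eq
    have h2 := hψmulN (a, (θ a)⁻¹) (b, (θ b)⁻¹) ((hNmem _).mpr ⟨a, ha, rfl⟩)
    rw [hab] at h2
    exact h2
  have hψ1 : ψ (1 : G₁ × G₂) = 0 := by
    have h1 := hψ 1 1
    rw [mul_one] at h1
    have h2 : F (1 : G₁ × G₂) 1 = 0 := by
      show fn (π 1) (π 1) = 0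
      rw [_root_.map_one]
      exact hfn1 _
    rw [h2] at h1
    have h3 : ψ (1 : G₁ × G₂) + ψ 1 - ψ 1 = ψ 1 := add_sub_cancel_right _ _
    rw [h3] at h1
    exact h1.symm
  have hμ1 : μ 1 = 0 := by
    show ψ ((1 : G₁), (θ 1)⁻¹) = 0
    rw [_root_.map_one, inv_one]
    exact hψ1
  have hcen : ∀ z : G₁, z ∈ K₁ → ∀ g : G₁, z * g = g * z := by
    intro z hz g
    have hc := hK₁ hz
    rw [Subgroup.mem_center_iff] at hc
    exact (hc g).symm
  -- the key commutator computation
  have hCM : ∀ x y : G₁, x * y * x⁻¹ * y⁻¹ ∈ K₁ → μ (x * y * x⁻¹ * y⁻¹) = 0 := by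
    intro x y hK
    set a := x * y * x⁻¹ * y⁻¹ with hadef
    have hθa : θ a = θ x * θ y * (θ x)⁻¹ * (θ y)⁻¹ := by
      simp only [hadef, _root_.map_mul, _root_.map_inv]
    have hcomm : π (x, θ y) * π (y, θ x) = π (y, θ x) * π (x, θ y) := by
      rw [← _root_.map_mul, ← _root_.map_mul]
      refine (QuotientGroup.mk'_eq_mk' N).mpr ⟨((a, (θ a)⁻¹) : G₁ × G₂)⁻¹,
        inv_mem ((hNmem _).mpr ⟨a, hK, rfl⟩), ?_⟩
      rw [Prod.mk_mul_mk, Prod.mk_mul_mk, Prod.inv_mk, Prod.mk_mul_mk]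
      have hθcen : ∀ g : G₂, θ a * g = g * θ a := by
        intro g
        have hmem2 : θ a ∈ K₂ := by
          rw [← hsurj]
          exact Subgroup.mem_map.mpr ⟨a, hK, rfl⟩
        have hc := hK₂ hmem2
        rw [Subgroup.mem_center_iff] at hc
        exact (hc g).symm
      refine Prod.ext ?_ ?_
      · show x * y * a⁻¹ = y * x
        have hx1 : a * (y * x) = x * y := by rw [hadef]; group
        rw [← hx1, hcen _ hK]
        group
      · show θ y * θ x * ((θ a)⁻¹)⁻¹ = θ x * θ y
        rw [inv_inv]
        have hx2 : θ a * (θ y * θ x) = θ x * θ y := by rw [hθa]; group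
        rw [← hx2]
        exact (hθcen (θ y * θ x)).symm
    have h1 : F (x, θ y) (y, θ x) = F (y, θ x) (x, θ y) := hsymm _ _ hcomm
    rw [hψ, hψ] at h1
    have h2 : ((x, θ y) : G₁ × G₂) * (y, θ x) = (x * y, θ y * θ x) := rfl
    have h3 : ((y, θ x) : G₁ × G₂) * (x, θ y) = (y * x, θ x * θ y) := rfl
    rw [h2, h3, add_comm (ψ (y, θ x)) (ψ (x, θ y))] at h1
    have h4 : ψ ((x * y, θ y * θ x) : G₁ × G₂) = ψ ((y * x, θ x * θ y) : G₁ × G₂) :=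
      sub_right_injective h1
    have h5 : ((x * y, θ y * θ x) : G₁ × G₂) = ((a, (θ a)⁻¹) : G₁ × G₂) * (y * x, θ x * θ y) := by
      rw [Prod.mk_mul_mk]
      refine Prod.ext ?_ ?_
      · show x * y = a * (y * x)
        rw [hadef]; group
      · show θ y * θ x = (θ a)⁻¹ * (θ x * θ y)
        rw [hθa]; group
    rw [h5, hψmulN _ _ ((hNmem _).mpr ⟨a, hK, rfl⟩)] at h4
    exact add_eq_right.mp h4
  -- transgression cocycle on G₁ ⧸ K₁
  set mkK : G₁ →* G₁ ⧸ K₁ := QuotientGroup.mk' K₁ with hmkKdef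
  classical
  set r : (G₁ ⧸ K₁) → G₁ := fun q => if q = 1 then 1 else Quotient.out q with hrdef
  have hr_spec : ∀ q, mkK (r q) = q := by
    intro q
    by_cases h : q = 1
    · simp [hrdef, h]
    · simp only [hrdef, if_neg h]
      exact QuotientGroup.out_eq' q
  have hr1 : r 1 = 1 := by simp [hrdef]
  have hKmem : ∀ g : G₁, mkK g = 1 → g ∈ K₁ := fun g h => (QuotientGroup.eq_one_iff g).mp h
  have hc3 : ∀ s t : G₁ ⧸ K₁, r s * r t * (r (s * t))⁻¹ ∈ K₁ := by
    intro s t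
    apply hKmem
    rw [_root_.map_mul, _root_.map_mul, _root_.map_inv, hr_spec, hr_spec, hr_spec]
    group
  set qt : (G₁ ⧸ K₁) → (G₁ ⧸ K₁) → QmodZ := fun s t => μ (r s * r t * (r (s * t))⁻¹) with hqtdef
  have hqtc : IsTwoCocycle qt := by
    intro s t w
    simp only [hqtdef]
    rw [mul_assoc s t w]
    rw [← hμadd _ (hc3 s t) _ (by rw [← mul_assoc s t w]; exact hc3 (s * t) w),
      ← hμadd _ (hc3 s (t * w)) _ (hc3 t w)]
    congr 1
    have hE : (r s * r t * (r (s * t))⁻¹) * (r (s * t) * r w * (r (s * (t * w)))⁻¹) =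
        r s * r t * r w * (r (s * (t * w)))⁻¹ := by group
    have hcw := hcen _ (hc3 t w)
    have hE' : (r s * r (t * w) * (r (s * (t * w)))⁻¹) * (r t * r w * (r (t * w))⁻¹) =
        r s * r t * r w * (r (s * (t * w)))⁻¹ := by
      calc (r s * r (t * w) * (r (s * (t * w)))⁻¹) * (r t * r w * (r (t * w))⁻¹)
          = r s * r (t * w) * ((r (s * (t * w)))⁻¹ * (r t * r w * (r (t * w))⁻¹)) := by
            group
        _ = r s * r (t * w) * ((r t * r w * (r (t * w))⁻¹) * (r (s * (t * w)))⁻¹) := by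
            rw [← hcw ((r (s * (t * w)))⁻¹)]
        _ = r s * (r (t * w) * (r t * r w * (r (t * w))⁻¹)) * (r (s * (t * w)))⁻¹ := by
            group
        _ = r s * ((r t * r w * (r (t * w))⁻¹) * r (t * w)) * (r (s * (t * w)))⁻¹ := by
            rw [← hcw (r (t * w))]
        _ = r s * r t * r w * (r (s * (t * w)))⁻¹ := by group
    rw [hE, hE']
  have hqtsym : ∀ s t : G₁ ⧸ K₁, s * t = t * s → qt s t = qt t s := by
    intro s t hst
    simp only [hqtdef]
    have hw : r s * r t * (r s)⁻¹ * (r t)⁻¹ ∈ K₁ := by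
      apply hKmem
      rw [_root_.map_mul, _root_.map_mul, _root_.map_mul, _root_.map_inv, _root_.map_inv, hr_spec, hr_spec]
      rw [hst]; group
    have h0 := hCM (r s) (r t) hw
    have hr2 : r (s * t) = r (t * s) := by rw [hst]
    have hA : r s * r t * (r (s * t))⁻¹ =
        (r s * r t * (r s)⁻¹ * (r t)⁻¹) * (r t * r s * (r (t * s))⁻¹) := by
      rw [hr2]; group
    rw [hA, hμadd _ hw _ (hc3 t s), h0, zero_add]
  obtain ⟨τ, hτ⟩ := hQ qt hqtc (fun A hA => hyp_of_symm qt hqtc hqtsym A hA)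
  have hτ1 : τ 1 = 0 := by
    have h1 : qt 1 1 = τ 1 + τ 1 - τ (1 * 1) := hτ 1 1
    rw [mul_one] at h1
    have h2 : qt 1 1 = 0 := by
      simp only [hqtdef, mul_one, one_mul]
      rw [hr1]
      simp only [one_mul, mul_one, inv_one]
      exact hμ1
    rw [h2] at h1
    have h3 : τ 1 + τ 1 - τ 1 = τ 1 := add_sub_cancel_right _ _
    rw [h3] at h1
    exact h1.symm
  have hcg : ∀ g : G₁, g * (r (mkK g))⁻¹ ∈ K₁ := by
    intro g
    apply hKmem
    rw [_root_.map_mul, _root_.map_inv, hr_spec]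
    group
  set χG : G₁ → QmodZ := fun g => μ (g * (r (mkK g))⁻¹) + τ (mkK g) with hχGdef
  have hχGadd : ∀ g h : G₁, χG (g * h) = χG g + χG h := by
    intro g h
    simp only [hχGdef]
    have hc2 := hcen _ (hcg h)
    have hele : (g * h) * (r (mkK (g * h)))⁻¹ =
        (g * (r (mkK g))⁻¹) * ((h * (r (mkK h))⁻¹) *
          (r (mkK g) * r (mkK h) * (r (mkK g * mkK h))⁻¹)) := by
      rw [_root_.map_mul]
      have h1 : (h * (r (mkK h))⁻¹) * (r (mkK g) * r (mkK h) * (r (mkK g * mkK h))⁻¹) =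
          r (mkK g) * (h * (r (mkK g * mkK h))⁻¹) := by
        calc (h * (r (mkK h))⁻¹) * (r (mkK g) * r (mkK h) * (r (mkK g * mkK h))⁻¹)
            = ((h * (r (mkK h))⁻¹) * r (mkK g)) * (r (mkK h) * (r (mkK g * mkK h))⁻¹) := by
              group
          _ = (r (mkK g) * (h * (r (mkK h))⁻¹)) * (r (mkK h) * (r (mkK g * mkK h))⁻¹) := by
              rw [hc2]
          _ = r (mkK g) * (h * (r (mkK g * mkK h))⁻¹) := by group
      rw [h1]
      group
    rw [hele, hμadd _ (hcg g) _ (mul_mem (hcg h) (hc3 (mkK g) (mkK h))),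
      hμadd _ (hcg h) _ (hc3 (mkK g) (mkK h)), _root_.map_mul]
    have hττ : μ (r (mkK g) * r (mkK h) * (r (mkK g * mkK h))⁻¹) =
        τ (mkK g) + τ (mkK h) - τ (mkK g * mkK h) := hτ (mkK g) (mkK h)
    rw [hττ]
    abel
  have hχGK : ∀ a ∈ K₁, χG a = μ a := by
    intro a ha
    simp only [hχGdef]
    have h1 : mkK a = 1 := (QuotientGroup.eq_one_iff a).mpr ha
    rw [h1, hr1, hτ1, inv_one, mul_one, add_zero]
  set ψ' : (G₁ × G₂) → QmodZ := fun x => ψ x - χG x.1 with hψ'def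
  have hψ'c : ∀ x y : G₁ × G₂, F x y = ψ' x + ψ' y - ψ' (x * y) := by
    intro x y
    simp only [hψ'def]
    rw [hψ x y]
    rw [show (x * y).1 = x.1 * y.1 from rfl, hχGadd]
    abel
  have hψ'N : ∀ nn ∈ N, ψ' nn = 0 := by
    intro nn hn
    obtain ⟨a, ha, rfl⟩ := (hNmem nn).mp hn
    show ψ ((a, (θ a)⁻¹) : G₁ × G₂) - χG a = 0
    rw [hχGK a ha]
    exact sub_self _
  have hψ'inv : ∀ (x nn : G₁ × G₂), nn ∈ N → ψ' (x * nn) = ψ' x := by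
    intro x nn hn
    have h1 := hψ'c x nn
    have h2 : F x nn = 0 := by
      show fn (π x) (π nn) = 0
      rw [hπN nn hn]
      exact hfn1' _
    rw [h2, hψ'N nn hn, add_zero] at h1
    exact (sub_eq_zero.mp h1.symm).symm
  set φG : ((G₁ × G₂) ⧸ N) → QmodZ := fun z => ψ' (Quotient.out z) with hφGdef
  have hφGspec : ∀ x : G₁ × G₂, φG (π x) = ψ' x := by
    intro x
    simp only [hφGdef]
    have h2 : x⁻¹ * Quotient.out (π x) ∈ N := by
      rw [← QuotientGroup.eq]
      exact (QuotientGroup.out_eq' (π x)).symm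
    have h3 : Quotient.out (π x) = x * (x⁻¹ * Quotient.out (π x)) := by group
    rw [h3, hψ'inv x _ h2]
  refine ⟨φG, fun z w => ?_⟩
  obtain ⟨xx, rfl⟩ := hπsur z
  obtain ⟨yy, rfl⟩ := hπsur w
  rw [← _root_.map_mul, hφGspec, hφGspec, hφGspec]
  exact hψ'c xx yy
end

section
/- Let p be a prime, n ≥ 2, and r, s ≥ 1. Then the commutator subgroup of UT_n^r(F_p) and UT_n^s(F_p) inside UT_n(F_p) equals UT_n^{r+s}(F_p), i.e. [UT_n^r(F_p), UT_n^s(F_p)] = UT_n^{r+s}(F_p) (where UT_n^ℓ(F_p) is the trivial subgroup when ℓ ≥ n). -/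
open Matrix

open scoped commutatorElement

/-! ### Auxiliary material for the commutator theorem -/

/-- `M i j = 0` whenever `j < i + ℓ`. -/
def StrJ (n p ℓ : ℕ) (M : Matrix (Fin n) (Fin n) (ZMod p)) : Prop :=
  ∀ i j : Fin n, (j : ℕ) < (i : ℕ) + ℓ → M i j = 0

lemma StrJ.mul {n p a b : ℕ} {M N : Matrix (Fin n) (Fin n) (ZMod p)}
    (hM : StrJ n p a M) (hN : StrJ n p b N) : StrJ n p (a + b) (M * N) := by
  intro i j hij
  rw [Matrix.mul_apply]
  apply Finset.sum_eq_zero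
  intro k _
  by_cases h1 : (k : ℕ) < (i : ℕ) + a
  · rw [hM i k h1, zero_mul]
  · rw [hN k j (by omega), mul_zero]

lemma StrJ.sub {n p a : ℕ} {M N : Matrix (Fin n) (Fin n) (ZMod p)}
    (hM : StrJ n p a M) (hN : StrJ n p a N) : StrJ n p a (M - N) := by
  intro i j hij
  rw [Matrix.sub_apply, hM i j hij, hN i j hij, sub_zero]

lemma UTP.strJ_zero {n p ℓ : ℕ} {A : Matrix (Fin n) (Fin n) (ZMod p)}
    (hA : UTP n p ℓ A) : StrJ n p 0 A := fun i j hij => hA.2 i j (Or.inl (by omega))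

lemma UTP.strJ_sub_one {n p ℓ : ℕ} {A : Matrix (Fin n) (Fin n) (ZMod p)}
    (hA : UTP n p ℓ A) (hℓ : 1 ≤ ℓ) : StrJ n p ℓ (A - 1) := by
  intro i j hij
  rw [Matrix.sub_apply]
  rcases Nat.lt_trichotomy (i : ℕ) (j : ℕ) with h | h | h
  · rw [hA.2 i j (Or.inr ⟨h, by omega⟩), Matrix.one_apply_ne (by
      intro hh; subst hh; omega), sub_zero]
  · have : i = j := Fin.ext h
    subst this
    rw [hA.1, Matrix.one_apply_eq, sub_self]
  · rw [hA.2 i j (Or.inl h), Matrix.one_apply_ne (by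
      intro hh; subst hh; omega), sub_zero]

lemma UTP.of_strJ {n p ℓ : ℕ} {A : Matrix (Fin n) (Fin n) (ZMod p)}
    (h : StrJ n p ℓ (A - 1)) (hℓ : 1 ≤ ℓ) : UTP n p ℓ A := by
  constructor
  · intro i
    have := h i i (by omega)
    rw [Matrix.sub_apply, Matrix.one_apply_eq] at this
    linear_combination this
  · intro i j hij
    have hne : i ≠ j := by rintro rfl; omega
    have := h i j (by omega)
    rw [Matrix.sub_apply, Matrix.one_apply_ne hne] at this
    linear_combination this

/-- Commutators of `UTd r` and `UTd s` lie in `UTd (r+s)`. -/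
lemma commutator_mem_UTd {p n r s : ℕ} [Fact p.Prime] (hr : 1 ≤ r) (hs : 1 ≤ s)
    {x y : (Matrix (Fin n) (Fin n) (ZMod p))ˣ}
    (hx : x ∈ UTd n p r) (hy : y ∈ UTd n p s) : ⁅x, y⁆ ∈ UTd n p (r + s) := by
  have hxU : UTP n p r (x : Matrix (Fin n) (Fin n) (ZMod p)) := hx
  have hyU : UTP n p s (y : Matrix (Fin n) (Fin n) (ZMod p)) := hy
  have hxiU : UTP n p r ((x⁻¹ : _ˣ) : Matrix (Fin n) (Fin n) (ZMod p)) :=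
    (UTd n p r).inv_mem hx
  have hyiU : UTP n p s ((y⁻¹ : _ˣ) : Matrix (Fin n) (Fin n) (ZMod p)) :=
    (UTd n p s).inv_mem hy
  set X := (x : Matrix (Fin n) (Fin n) (ZMod p)) with hX
  set Y := (y : Matrix (Fin n) (Fin n) (ZMod p)) with hY
  set Q := ((x⁻¹ : _ˣ) : Matrix (Fin n) (Fin n) (ZMod p)) *
    ((y⁻¹ : _ˣ) : Matrix (Fin n) (Fin n) (ZMod p)) with hQ
  have hQone : Y * X * Q = 1 := by
    have h1 : (y * x * (x⁻¹ * y⁻¹) : (Matrix (Fin n) (Fin n) (ZMod p))ˣ) = 1 := by group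
    have h2 := congrArg Units.val h1
    rw [Units.val_mul, Units.val_mul, Units.val_mul, Units.val_one] at h2
    rw [hQ, ← mul_assoc] at *
    exact h2
  have hcv : ((⁅x, y⁆ : (Matrix (Fin n) (Fin n) (ZMod p))ˣ) :
      Matrix (Fin n) (Fin n) (ZMod p)) = X * Y * Q := by
    rw [commutatorElement_def, Units.val_mul, Units.val_mul, Units.val_mul, hQ, mul_assoc]
  have hcval : ((⁅x, y⁆ : (Matrix (Fin n) (Fin n) (ZMod p))ˣ) :
      Matrix (Fin n) (Fin n) (ZMod p)) - 1 = (X * Y - Y * X) * Q := by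
    rw [hcv, ← hQone]; noncomm_ring
  have h2 : StrJ n p (r + s) (X * Y - Y * X) := by
    have hcomm : X * Y - Y * X = (X - 1) * (Y - 1) - (Y - 1) * (X - 1) := by noncomm_ring
    rw [hcomm]
    have ha := (hxU.strJ_sub_one hr).mul (hyU.strJ_sub_one hs)
    have hb := (hyU.strJ_sub_one hs).mul (hxU.strJ_sub_one hr)
    rw [Nat.add_comm s r] at hb
    exact ha.sub hb
  have hQstr : StrJ n p 0 Q := by
    exact (hxiU.strJ_zero).mul (hyiU.strJ_zero)
  have hstr : StrJ n p (r + s) (((⁅x, y⁆ : (Matrix (Fin n) (Fin n) (ZMod p))ˣ) :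
      Matrix (Fin n) (Fin n) (ZMod p)) - 1) := by
    rw [hcval]
    exact h2.mul hQstr
  exact UTP.of_strJ hstr (by omega)

/-! ### Transvection lemmas -/

lemma tvUnit_mul {n p : ℕ} [Fact p.Prime] (a b : Fin n) (hab : a ≠ b) (c d : ZMod p) :
    tvUnit n p a b hab c * tvUnit n p a b hab d = tvUnit n p a b hab (c + d) := by
  apply Units.ext
  show Matrix.transvection a b c * Matrix.transvection a b d = Matrix.transvection a b (c + d)
  exact Matrix.transvection_mul_transvection_same a b hab c d

lemma tvUnit_zero {n p : ℕ} [Fact p.Prime] (a b : Fin n) (hab : a ≠ b) :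
    tvUnit n p a b hab 0 = 1 := by
  apply Units.ext
  show Matrix.transvection a b (0 : ZMod p) = 1
  simp [Matrix.transvection]

lemma tvUnit_mem_UTd {n p ℓ : ℕ} [Fact p.Prime] (a b : Fin n) (hab : (a : ℕ) < (b : ℕ))
    (hl : (a : ℕ) + ℓ ≤ (b : ℕ)) (c : ZMod p) :
    tvUnit n p a b (Fin.ne_of_val_ne (Nat.ne_of_lt hab)) c ∈ UTd n p ℓ := by
  constructor
  · intro i
    simp only [tvUnit, Matrix.transvection, Matrix.add_apply, Matrix.one_apply_eq,
      Matrix.single, Matrix.of_apply]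
    have : ¬(a = i ∧ b = i) := by rintro ⟨rfl, rfl⟩; omega
    rw [if_neg this, add_zero]
  · intro i j hij
    have hne : i ≠ j := by rintro rfl; omega
    simp only [tvUnit, Matrix.transvection, Matrix.add_apply, Matrix.one_apply_ne hne,
      Matrix.single, Matrix.of_apply]
    have : ¬(a = i ∧ b = j) := by
      rintro ⟨rfl, rfl⟩
      rcases hij with h | h <;> omega
    rw [if_neg this, add_zero]

lemma tvUnit_commutator {n p : ℕ} [Fact p.Prime] (a b e : Fin n)
    (h1 : (a : ℕ) < (b : ℕ)) (h2 : (b : ℕ) < (e : ℕ)) (c d : ZMod p) :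
    ⁅tvUnit n p a b (Fin.ne_of_val_ne (Nat.ne_of_lt h1)) c,
      tvUnit n p b e (Fin.ne_of_val_ne (Nat.ne_of_lt h2)) d⁆ =
    tvUnit n p a e (Fin.ne_of_val_ne (Nat.ne_of_lt (h1.trans h2))) (c * d) := by
  have hba : b ≠ a := Fin.ne_of_val_ne (by omega)
  have heb : e ≠ b := Fin.ne_of_val_ne (by omega)
  have hea : e ≠ a := Fin.ne_of_val_ne (by omega)
  set X := tvUnit n p a b (Fin.ne_of_val_ne (Nat.ne_of_lt h1)) c with hXdef
  set Y := tvUnit n p b e (Fin.ne_of_val_ne (Nat.ne_of_lt h2)) d with hYdef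
  set T := tvUnit n p a e (Fin.ne_of_val_ne (Nat.ne_of_lt (h1.trans h2))) (c * d) with hTdef
  have key : X * Y = T * (Y * X) := by
    apply Units.ext
    show Matrix.transvection a b c * Matrix.transvection b e d =
      Matrix.transvection a e (c * d) * (Matrix.transvection b e d * Matrix.transvection a b c)
    simp only [Matrix.transvection, add_mul, mul_add, one_mul, mul_one,
      Matrix.single_mul_single_same, Matrix.single_mul_single_of_ne,
      hba, heb, hea, ne_eq, not_false_eq_true,
      add_zero, zero_add, zero_mul, mul_zero]
    abel
  rw [commutatorElement_def, key]
  group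

lemma tvUnit_mem_commutator {n p r s : ℕ} [Fact p.Prime] (hr : 1 ≤ r) (hs : 1 ≤ s)
    (a b : Fin n) (hab : (a : ℕ) < (b : ℕ)) (hl : (a : ℕ) + (r + s) ≤ (b : ℕ)) (c : ZMod p) :
    tvUnit n p a b (Fin.ne_of_val_ne (Nat.ne_of_lt hab)) c ∈ ⁅UTd n p r, UTd n p s⁆ := by
  have hbn := b.isLt
  set m : Fin n := ⟨(a : ℕ) + r, by omega⟩ with hm
  have h1 : (a : ℕ) < (m : ℕ) := by simp [hm]; omega
  have h2 : (m : ℕ) < (b : ℕ) := by simp [hm]; omega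
  have key : (⁅tvUnit n p a m (Fin.ne_of_val_ne (Nat.ne_of_lt h1)) c,
      tvUnit n p m b (Fin.ne_of_val_ne (Nat.ne_of_lt h2)) 1⁆ :
        (Matrix (Fin n) (Fin n) (ZMod p))ˣ) =
      tvUnit n p a b (Fin.ne_of_val_ne (Nat.ne_of_lt hab)) c := by
    rw [tvUnit_commutator a m b h1 h2 c 1, mul_one]
  rw [← key]
  exact Subgroup.commutator_mem_commutator
    (tvUnit_mem_UTd a m h1 (by simp [hm]) c)
    (tvUnit_mem_UTd m b h2 (by simp [hm]; omega) 1)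

lemma clear_diag {n p r s : ℕ} [Fact p.Prime] (hr : 1 ≤ r) (hs : 1 ≤ s) (ℓ : ℕ)
    (hℓ : r + s ≤ ℓ)
    (hnext : UTd n p (ℓ + 1) ≤ ⁅UTd n p r, UTd n p s⁆) :
    ∀ d m : ℕ, n ≤ m + d → ∀ x : (Matrix (Fin n) (Fin n) (ZMod p))ˣ, x ∈ UTd n p ℓ →
      (∀ i j : Fin n, (i : ℕ) < m → (j : ℕ) = (i : ℕ) + ℓ →
        (x : Matrix (Fin n) (Fin n) (ZMod p)) i j = 0) →
      x ∈ ⁅UTd n p r, UTd n p s⁆ := by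
  intro d
  induction d with
  | zero =>
    intro m hm x hx hcl
    have hxU : UTP n p ℓ (x : Matrix (Fin n) (Fin n) (ZMod p)) := hx
    apply hnext
    constructor
    · exact hxU.1
    · intro i j hij
      rcases hij with h | h
      · exact hxU.2 i j (Or.inl h)
      · by_cases hd : (j : ℕ) - (i : ℕ) < ℓ
        · exact hxU.2 i j (Or.inr ⟨h.1, hd⟩)
        · exact hcl i j (by have := i.isLt; omega) (by omega)
  | succ d ih =>
    intro m hm x hx hcl
    have hxU : UTP n p ℓ (x : Matrix (Fin n) (Fin n) (ZMod p)) := hx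
    by_cases hnm : n ≤ m + d
    · exact ih m hnm x hx hcl
    by_cases hme : m + ℓ < n
    · set a : Fin n := ⟨m, by omega⟩ with ha
      set b : Fin n := ⟨m + ℓ, hme⟩ with hb
      have habv : (a : ℕ) < (b : ℕ) := by simp [ha, hb]; omega
      have hxeq : x =
          (x * tvUnit n p a b (Fin.ne_of_val_ne (Nat.ne_of_lt habv))
            (-((x : Matrix (Fin n) (Fin n) (ZMod p)) a b))) *
          tvUnit n p a b (Fin.ne_of_val_ne (Nat.ne_of_lt habv))
            ((x : Matrix (Fin n) (Fin n) (ZMod p)) a b) := by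
        rw [mul_assoc, tvUnit_mul, neg_add_cancel, tvUnit_zero, mul_one]
      rw [hxeq]
      apply mul_mem
      · apply ih (m + 1) (by omega)
        · exact mul_mem hx (tvUnit_mem_UTd a b habv (by simp [ha, hb]) _)
        · intro i j hi hj
          rw [Units.val_mul]
          show ((x : Matrix (Fin n) (Fin n) (ZMod p)) *
            Matrix.transvection a b (-((x : Matrix (Fin n) (Fin n) (ZMod p)) a b))) i j = 0
          rw [Matrix.transvection, mul_add, mul_one, Matrix.add_apply]
          by_cases hjb : j = b
          · subst hjb
            rw [Matrix.mul_single_apply_same]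
            have hia : i = a := by
              apply Fin.ext
              have hbv : (b : ℕ) = m + ℓ := rfl
              have hav : (a : ℕ) = m := rfl
              omega
            subst hia
            rw [hxU.1]
            ring
          · rw [Matrix.mul_single_apply_of_ne _ _ _ _ _ hjb, add_zero]
            apply hcl i j ?_ hj
            have hjv : (j : ℕ) ≠ (b : ℕ) := fun h => hjb (Fin.ext h)
            have hbv : (b : ℕ) = m + ℓ := rfl
            omega
      · exact tvUnit_mem_commutator hr hs a b habv (by simp [ha, hb]; omega) _
    · apply ih (m + 1) (by omega) x hx
      intro i j hi hj
      by_cases him : (i : ℕ) < m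
      · exact hcl i j him hj
      · exfalso
        have := j.isLt
        omega

lemma UTd_le_commutator {n p r s : ℕ} [Fact p.Prime] (hr : 1 ≤ r) (hs : 1 ≤ s) :
    ∀ t ℓ : ℕ, r + s ≤ ℓ → n ≤ ℓ + t → UTd n p ℓ ≤ ⁅UTd n p r, UTd n p s⁆ := by
  intro t
  induction t with
  | zero =>
    intro ℓ hℓ hnℓ x hx
    have hxU : UTP n p ℓ (x : Matrix (Fin n) (Fin n) (ZMod p)) := hx
    have hx1 : x = 1 := by
      apply Units.ext
      show (x : Matrix (Fin n) (Fin n) (ZMod p)) = 1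
      ext i j
      by_cases hij : i = j
      · subst hij; rw [hxU.1, Matrix.one_apply_eq]
      · rw [Matrix.one_apply_ne hij]
        apply hxU.2
        have h1 : (i : ℕ) ≠ (j : ℕ) := fun h => hij (Fin.ext h)
        have := i.isLt
        have := j.isLt
        omega
    rw [hx1]
    exact one_mem _
  | succ t ih =>
    intro ℓ hℓ hnℓ x hx
    exact clear_diag hr hs ℓ hℓ (ih (ℓ + 1) (by omega) (by omega)) n 0 (by omega) x hx
      (fun i j hi _ => absurd hi (by omega))

theorem commutator_UTd (p n r s : ℕ) [Fact p.Prime] (hn : 2 ≤ n) (hr : 1 ≤ r) (hs : 1 ≤ s) :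
    ⁅UTd n p r, UTd n p s⁆ = UTd n p (r + s) := by
  apply le_antisymm
  · rw [Subgroup.commutator_le]
    intro x hx y hy
    exact commutator_mem_UTd hr hs hx hy
  · exact UTd_le_commutator hr hs n (r + s) le_rfl (by omega)
end

section
/- Let p be a prime and n ≥ 3. There exists a group homomorphism θ : UT_{n−1}(F_p) → UT_n(F_p) such that θ(t_{1,j}(α)) = t_{1,j+1}(α) for all 2 ≤ j ≤ n−1 and α ∈ F_p, and θ(t_{i,j}(α)) = t_{i+1,j+1}(α) for all 2 ≤ i < j ≤ n−1 and α ∈ F_p. In particular θ(t_{1,n−1}(1)) = t_{1,n}(1), so θ maps the center of UT_{n−1}(F_p) isomorphically onto the center of UT_n(F_p). -/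
open Matrix

/-! ### Auxiliary: characterization of the center of `UT_n(F_p)` -/

lemma mem_center_tv (m p : ℕ) [Fact p.Prime] (hm : 2 ≤ m) (g : ↥(UT m p))
    (hg : g ∈ Subgroup.center ↥(UT m p)) :
    ∃ c : ZMod p, g = tv m p 1 m (le_refl 1) (by omega) (le_refl m) c := by
  obtain ⟨hd, hl⟩ := g.2
  set G : Matrix (Fin m) (Fin m) (ZMod p) :=
    ((g : (Matrix (Fin m) (Fin m) (ZMod p))ˣ) : Matrix (Fin m) (Fin m) (ZMod p)) with hGdef
  have hcomm : ∀ a b : Fin m, (a : ℕ) < (b : ℕ) →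
      Matrix.single a b (1 : ZMod p) * G = G * Matrix.single a b 1 := by
    intro a b hab
    have hb := b.isLt
    have h := Subgroup.mem_center_iff.mp hg
      (tv m p ((a : ℕ) + 1) ((b : ℕ) + 1) (by omega) (by omega) (by omega) 1)
    have h' : Matrix.transvection a b (1 : ZMod p) * G = G * Matrix.transvection a b 1 :=
      congrArg (fun z : ↥(UT m p) =>
        ((z : (Matrix (Fin m) (Fin m) (ZMod p))ˣ) : Matrix (Fin m) (Fin m) (ZMod p))) h
    rw [Matrix.transvection, add_mul, mul_add, one_mul, mul_one] at h'
    exact add_left_cancel h'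
  have hcol : ∀ a b x : Fin m, (a : ℕ) < (b : ℕ) → x ≠ a → G x a = 0 := by
    intro a b x hab hx
    have h := congrFun (congrFun (hcomm a b hab) x) b
    rw [Matrix.single_mul_apply_of_ne (c := 1) (i := a) (j := b) (a := x) (b := b) (h := hx) (M := G),
      Matrix.mul_single_apply_same (c := 1) (i := a) (j := b) (a := x) (M := G), mul_one] at h
    exact h.symm
  have hrow : ∀ a b y : Fin m, (a : ℕ) < (b : ℕ) → y ≠ b → G b y = 0 := by
    intro a b y hab hy
    have h := congrFun (congrFun (hcomm a b hab) a) y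
    rw [Matrix.single_mul_apply_same (c := 1) (i := a) (j := b) (b := y) (M := G),
      Matrix.mul_single_apply_of_ne (c := 1) (i := a) (j := b) (a := a) (b := y) (hbj := hy) (M := G), one_mul] at h
    exact h
  refine ⟨G ⟨0, by omega⟩ ⟨m - 1, by omega⟩, ?_⟩
  apply Subtype.ext
  apply Units.ext
  show G = Matrix.transvection ⟨0, by omega⟩ ⟨m - 1, by omega⟩ (G ⟨0, by omega⟩ ⟨m - 1, by omega⟩)
  ext x y
  rw [Matrix.transvection, Matrix.add_apply]
  show G x y = (1 : Matrix (Fin m) (Fin m) (ZMod p)) x y +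
    (if (⟨0, by omega⟩ : Fin m) = x ∧ (⟨m - 1, by omega⟩ : Fin m) = y
      then G ⟨0, by omega⟩ ⟨m - 1, by omega⟩ else 0)
  by_cases hxy : x = y
  · subst hxy
    have hcond : ¬((⟨0, by omega⟩ : Fin m) = x ∧ (⟨m - 1, by omega⟩ : Fin m) = x) := by
      rintro ⟨rfl, h2⟩
      have := congrArg Fin.val h2
      simp at this
      omega
    rw [if_neg hcond, add_zero, Matrix.one_apply_eq, hd]
  · rw [Matrix.one_apply_ne hxy, zero_add]
    by_cases hcorner : (x : ℕ) = 0 ∧ (y : ℕ) = m - 1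
    · have hx : x = (⟨0, by omega⟩ : Fin m) := Fin.ext hcorner.1
      have hy : y = (⟨m - 1, by omega⟩ : Fin m) := Fin.ext hcorner.2
      rw [if_pos ⟨hx.symm, hy.symm⟩, hx, hy]
    · have hcond : ¬((⟨0, by omega⟩ : Fin m) = x ∧ (⟨m - 1, by omega⟩ : Fin m) = y) := by
        rintro ⟨h1, h2⟩
        exact hcorner ⟨(congrArg Fin.val h1).symm, (congrArg Fin.val h2).symm⟩
      rw [if_neg hcond]
      rcases Nat.lt_or_ge (y : ℕ) (x : ℕ) with h | h
      · exact hl x y h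
      have hxlty : (x : ℕ) < (y : ℕ) := by
        rcases Nat.lt_or_ge (x : ℕ) (y : ℕ) with h' | h'
        · exact h'
        · exact absurd (Fin.ext (le_antisymm h h')) hxy
      by_cases hy : (y : ℕ) < m - 1
      · exact hcol y ⟨(y : ℕ) + 1, by omega⟩ x (by simp) hxy
      · have hx0 : (x : ℕ) ≠ 0 := by
          intro h0
          have := y.isLt
          exact hcorner ⟨h0, by omega⟩
        exact hrow ⟨0, by omega⟩ x y (by simp; omega) (Ne.symm hxy)

/-! ### Auxiliary: the shift embedding -/

/-- Forward map of the index bijection. -/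
def shiftFun (n : ℕ) (hn : 3 ≤ n) : Fin (n - 1) ⊕ Fin 1 → Fin n
  | Sum.inl i => if (i : ℕ) = 0 then ⟨0, by omega⟩
      else ⟨(i : ℕ) + 1, by have := i.isLt; omega⟩
  | Sum.inr _ => ⟨1, (by omega : 1 + 0 < n)⟩

/-- Inverse map of the index bijection. -/
def shiftInv (n : ℕ) (hn : 3 ≤ n) (u : Fin n) : Fin (n - 1) ⊕ Fin 1 :=
  if (u : ℕ) = 0 then Sum.inl ⟨0, by omega⟩
  else if (u : ℕ) = 1 then Sum.inr 0
  else Sum.inl ⟨(u : ℕ) - 1, by have := u.isLt; omega⟩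

/-- The index bijection: `inl 0 ↦ 0`, `inl i ↦ i+1` for `i ≥ 1`, `inr ↦ 1`. -/
def shiftEquiv (n : ℕ) (hn : 3 ≤ n) : Fin (n - 1) ⊕ Fin 1 ≃ Fin n where
  toFun := shiftFun n hn
  invFun := shiftInv n hn
  left_inv := by
    rintro (i | j)
    · have hlt := i.isLt
      show shiftInv n hn (shiftFun n hn (Sum.inl i)) = Sum.inl i
      rw [shiftFun, shiftInv]
      split_ifs <;> simp_all [Fin.ext_iff] <;> omega
    · show shiftInv n hn (shiftFun n hn (Sum.inr j)) = Sum.inr j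
      have hj : j = 0 := Subsingleton.elim _ _
      subst hj
      rw [shiftFun, shiftInv]
      split_ifs <;> simp_all
  right_inv := by
    intro u
    have hlt := u.isLt
    show shiftFun n hn (shiftInv n hn u) = u
    rw [shiftInv]
    split_ifs with h0 h1
    · rw [shiftFun]
      simp_all [Fin.ext_iff]
    · rw [shiftFun]
      simp_all [Fin.ext_iff]
    · rw [shiftFun]
      split_ifs <;> simp_all [Fin.ext_iff] <;> omega

lemma shiftEquiv_inl_val (n : ℕ) (hn : 3 ≤ n) (a : Fin (n - 1)) :
    ((shiftEquiv n hn (Sum.inl a)) : ℕ) = if (a : ℕ) = 0 then 0 else (a : ℕ) + 1 := by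
  show ((shiftFun n hn (Sum.inl a)) : ℕ) = _
  rw [shiftFun]
  split_ifs <;> rfl

lemma shiftEquiv_inr_val (n : ℕ) (hn : 3 ≤ n) (a : Fin 1) :
    ((shiftEquiv n hn (Sum.inr a)) : ℕ) = 1 := rfl

/-- The matrix-level shift map as a monoid homomorphism. -/
def shiftMulHom (n p : ℕ) [Fact p.Prime] (hn : 3 ≤ n) :
    Matrix (Fin (n - 1)) (Fin (n - 1)) (ZMod p) →* Matrix (Fin n) (Fin n) (ZMod p) where
  toFun A := (Matrix.reindex (shiftEquiv n hn) (shiftEquiv n hn))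
    (Matrix.fromBlocks A 0 0 (1 : Matrix (Fin 1) (Fin 1) (ZMod p)))
  map_one' := by
    show (Matrix.reindex (shiftEquiv n hn) (shiftEquiv n hn))
      (Matrix.fromBlocks 1 0 0 1) = 1
    rw [Matrix.fromBlocks_one]
    simp [Matrix.reindex_apply, Matrix.submatrix_one_equiv]
  map_mul' A B := by
    simp only [Matrix.reindex_apply, Matrix.submatrix_mul_equiv, Matrix.fromBlocks_multiply]
    congr 1 <;> simp

lemma shiftMulHom_injective (n p : ℕ) [Fact p.Prime] (hn : 3 ≤ n) :
    Function.Injective (shiftMulHom n p hn) := by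
  intro A B h
  have h2 := (Matrix.reindex (shiftEquiv n hn) (shiftEquiv n hn)).injective h
  have h3 := congrArg Matrix.toBlocks₁₁ h2
  simpa [Matrix.toBlocks_fromBlocks₁₁] using h3

lemma shiftMulHom_transvection (n p : ℕ) [Fact p.Prime] (hn : 3 ≤ n)
    (a b : Fin (n - 1)) (c : ZMod p) :
    shiftMulHom n p hn (Matrix.transvection a b c) =
      Matrix.transvection (shiftEquiv n hn (Sum.inl a)) (shiftEquiv n hn (Sum.inl b)) c := by
  show (Matrix.reindex (shiftEquiv n hn) (shiftEquiv n hn))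
      (Matrix.fromBlocks (Matrix.transvection a b c) 0 0 1) = _
  rw [Matrix.transvection, Matrix.transvection]
  have hsplit : Matrix.fromBlocks (1 + Matrix.single a b c) 0 0
      (1 : Matrix (Fin 1) (Fin 1) (ZMod p)) =
      Matrix.fromBlocks 1 0 0 1 + Matrix.fromBlocks (Matrix.single a b c) 0 0 0 := by
    rw [Matrix.fromBlocks_add]
    congr 1 <;> simp
  rw [hsplit, Matrix.fromBlocks_one]
  have h1 : (Matrix.reindex (shiftEquiv n hn) (shiftEquiv n hn))
      ((1 : Matrix (Fin (n-1) ⊕ Fin 1) (Fin (n-1) ⊕ Fin 1) (ZMod p)) +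
        Matrix.fromBlocks (Matrix.single a b c) 0 0 0) =
      (1 : Matrix (Fin n) (Fin n) (ZMod p)) +
        (Matrix.reindex (shiftEquiv n hn) (shiftEquiv n hn))
          (Matrix.fromBlocks (Matrix.single a b c) 0 0 0) := by
    simp [Matrix.reindex_apply, Matrix.submatrix_add, Matrix.submatrix_one_equiv]
  rw [h1]
  congr 1
  ext u v
  rw [Matrix.reindex_apply, Matrix.submatrix_apply]
  rcases hu : (shiftEquiv n hn).symm u with i | i <;>
    rcases hv : (shiftEquiv n hn).symm v with j | j
  · rw [Matrix.fromBlocks_apply₁₁]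
    have hu' : u = shiftEquiv n hn (Sum.inl i) := (Equiv.symm_apply_eq _).mp hu
    have hv' : v = shiftEquiv n hn (Sum.inl j) := (Equiv.symm_apply_eq _).mp hv
    subst hu' hv'
    show (if a = i ∧ b = j then c else 0) = _
    show _ = if shiftEquiv n hn (Sum.inl a) = shiftEquiv n hn (Sum.inl i) ∧
        shiftEquiv n hn (Sum.inl b) = shiftEquiv n hn (Sum.inl j) then c else 0
    congr 1
    simp [Equiv.apply_eq_iff_eq]
  · rw [Matrix.fromBlocks_apply₁₂]
    have hv' : v = shiftEquiv n hn (Sum.inr j) := (Equiv.symm_apply_eq _).mp hv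
    subst hv'
    show (0 : ZMod p) = if shiftEquiv n hn (Sum.inl a) = u ∧
        shiftEquiv n hn (Sum.inl b) = shiftEquiv n hn (Sum.inr j) then c else 0
    rw [if_neg]
    rintro ⟨-, h2⟩
    simpa using (shiftEquiv n hn).injective h2
  · rw [Matrix.fromBlocks_apply₂₁]
    have hu' : u = shiftEquiv n hn (Sum.inr i) := (Equiv.symm_apply_eq _).mp hu
    subst hu'
    show (0 : ZMod p) = if shiftEquiv n hn (Sum.inl a) = shiftEquiv n hn (Sum.inr i) ∧
        shiftEquiv n hn (Sum.inl b) = v then c else 0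
    rw [if_neg]
    rintro ⟨h1', -⟩
    simpa using (shiftEquiv n hn).injective h1'
  · rw [Matrix.fromBlocks_apply₂₂]
    have hu' : u = shiftEquiv n hn (Sum.inr i) := (Equiv.symm_apply_eq _).mp hu
    subst hu'
    show (0 : ZMod p) = if shiftEquiv n hn (Sum.inl a) = shiftEquiv n hn (Sum.inr i) ∧
        shiftEquiv n hn (Sum.inl b) = v then c else 0
    rw [if_neg]
    rintro ⟨h1', -⟩
    simpa using (shiftEquiv n hn).injective h1'

lemma shiftMulHom_mem_UT (n p : ℕ) [Fact p.Prime] (hn : 3 ≤ n) (x : ↥(UT (n - 1) p)) :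
    Units.map (shiftMulHom n p hn) (x : (Matrix (Fin (n-1)) (Fin (n-1)) (ZMod p))ˣ)
      ∈ UT n p := by
  obtain ⟨hd, hl⟩ := x.2
  set A : Matrix (Fin (n-1)) (Fin (n-1)) (ZMod p) :=
    ((x : (Matrix (Fin (n-1)) (Fin (n-1)) (ZMod p))ˣ) : Matrix (Fin (n-1)) (Fin (n-1)) (ZMod p))
  have hval : ∀ u v : Fin n,
      ((Units.map (shiftMulHom n p hn) (x : (Matrix (Fin (n-1)) (Fin (n-1)) (ZMod p))ˣ) :
        (Matrix (Fin n) (Fin n) (ZMod p))ˣ) : Matrix (Fin n) (Fin n) (ZMod p)) u v =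
      Matrix.fromBlocks A 0 0 (1 : Matrix (Fin 1) (Fin 1) (ZMod p))
        ((shiftEquiv n hn).symm u) ((shiftEquiv n hn).symm v) := by
    intro u v; rfl
  constructor
  · intro i
    rw [hval]
    rcases h : (shiftEquiv n hn).symm i with a | a
    · rw [Matrix.fromBlocks_apply₁₁]; exact hd a
    · rw [Matrix.fromBlocks_apply₂₂]; exact Matrix.one_apply_eq a
  · intro i j hij
    rw [hval]
    rcases h1 : (shiftEquiv n hn).symm i with a | a <;>
      rcases h2 : (shiftEquiv n hn).symm j with b | b
    · rw [Matrix.fromBlocks_apply₁₁]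
      apply hl
      -- from h1, h2, and hij : j < i deduce b < a
      have hi' : i = shiftEquiv n hn (Sum.inl a) := (Equiv.symm_apply_eq _).mp h1
      have hj' : j = shiftEquiv n hn (Sum.inl b) := (Equiv.symm_apply_eq _).mp h2
      subst hi' hj'
      rw [shiftEquiv_inl_val, shiftEquiv_inl_val] at hij
      split_ifs at hij <;> omega
    · rw [Matrix.fromBlocks_apply₁₂]; rfl
    · rw [Matrix.fromBlocks_apply₂₁]; rfl
    · rw [Matrix.fromBlocks_apply₂₂]
      exfalso
      have hi' : i = shiftEquiv n hn (Sum.inr a) := (Equiv.symm_apply_eq _).mp h1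
      have hj' : j = shiftEquiv n hn (Sum.inr b) := (Equiv.symm_apply_eq _).mp h2
      have hv1 : (i : ℕ) = 1 := by rw [hi']; exact shiftEquiv_inr_val n hn a
      have hv2 : (j : ℕ) = 1 := by rw [hj']; exact shiftEquiv_inr_val n hn b
      omega

/-- The shift homomorphism `UT_{n-1}(F_p) →* UT_n(F_p)`. -/
def shiftHom (n p : ℕ) [Fact p.Prime] (hn : 3 ≤ n) : ↥(UT (n - 1) p) →* ↥(UT n p) :=
  ((Units.map (shiftMulHom n p hn)).comp (UT (n - 1) p).subtype).codRestrict (UT n p)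
    (shiftMulHom_mem_UT n p hn)

lemma shiftHom_injective (n p : ℕ) [Fact p.Prime] (hn : 3 ≤ n) :
    Function.Injective (shiftHom n p hn) := by
  intro x y h
  have h1 : Units.map (shiftMulHom n p hn) (x : (Matrix (Fin (n-1)) (Fin (n-1)) (ZMod p))ˣ) =
      Units.map (shiftMulHom n p hn) (y : (Matrix (Fin (n-1)) (Fin (n-1)) (ZMod p))ˣ) :=
    congrArg Subtype.val h
  have h2 := congrArg Units.val h1
  have h3 := shiftMulHom_injective n p hn h2
  exact Subtype.ext (Units.ext h3)

lemma shiftHom_tv (n p : ℕ) [Fact p.Prime] (hn : 3 ≤ n)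
    (i j : ℕ) (h1 : 1 ≤ i) (hij : i < j) (hj : j ≤ n - 1)
    (i' j' : ℕ) (h1' : 1 ≤ i') (hij' : i' < j') (hj' : j' ≤ n)
    (hii' : i' = if i = 1 then 1 else i + 1) (hjj' : j' = j + 1) (c : ZMod p) :
    shiftHom n p hn (tv (n - 1) p i j h1 hij hj c) = tv n p i' j' h1' hij' hj' c := by
  apply Subtype.ext
  apply Units.ext
  show shiftMulHom n p hn (Matrix.transvection ⟨i - 1, by omega⟩ ⟨j - 1, by omega⟩ c) = _
  rw [shiftMulHom_transvection]
  have e1 : shiftEquiv n hn (Sum.inl ⟨i - 1, by omega⟩) = (⟨i' - 1, by omega⟩ : Fin n) := by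
    apply Fin.ext
    rw [shiftEquiv_inl_val]
    by_cases hi1 : i = 1
    · rw [if_pos hi1] at hii'
      rw [if_pos (by show i - 1 = 0; omega)]
      show (0 : ℕ) = i' - 1
      omega
    · rw [if_neg hi1] at hii'
      rw [if_neg (by show ¬ (i - 1 = 0); omega)]
      show (i - 1) + 1 = i' - 1
      omega
  have e2 : shiftEquiv n hn (Sum.inl ⟨j - 1, by omega⟩) = (⟨j' - 1, by omega⟩ : Fin n) := by
    apply Fin.ext
    rw [shiftEquiv_inl_val]
    rw [if_neg (by show ¬ (j - 1 = 0); omega)]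
    show (j - 1) + 1 = j' - 1
    omega
  rw [e1, e2]
  rfl

theorem exists_shift_hom (p n : ℕ) [Fact p.Prime] (hn : 3 ≤ n) :
    ∃ θ : ↥(UT (n - 1) p) →* ↥(UT n p),
      (∀ (j : ℕ) (h2 : 2 ≤ j) (hj : j ≤ n - 1) (α : ZMod p),
        θ (tv (n - 1) p 1 j (le_refl 1) (by omega) hj α)
          = tv n p 1 (j + 1) (le_refl 1) (by omega) (by omega) α) ∧
      (∀ (i j : ℕ) (h2 : 2 ≤ i) (hij : i < j) (hj : j ≤ n - 1) (α : ZMod p),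
        θ (tv (n - 1) p i j (by omega) hij hj α)
          = tv n p (i + 1) (j + 1) (by omega) (by omega) (by omega) α) ∧
      θ (tv (n - 1) p 1 (n - 1) (le_refl 1) (by omega) (le_refl (n - 1)) 1)
        = tv n p 1 n (le_refl 1) (by omega) (le_refl n) 1 ∧
      Subgroup.map θ (Subgroup.center ↥(UT (n - 1) p)) = Subgroup.center ↥(UT n p) ∧
      Set.InjOn θ (Subgroup.center ↥(UT (n - 1) p)) := by
  refine ⟨shiftHom n p hn, ?_, ?_, ?_, ?_, ?_⟩
  · intro j h2 hj α
    exact shiftHom_tv n p hn 1 j (le_refl 1) (by omega) hj 1 (j + 1) (le_refl 1) (by omega)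
      (by omega) (by simp) rfl α
  · intro i j h2 hij hj α
    exact shiftHom_tv n p hn i j (by omega) hij hj (i + 1) (j + 1) (by omega) (by omega)
      (by omega) (by rw [if_neg (by omega)]) rfl α
  · have h := shiftHom_tv n p hn 1 (n - 1) (le_refl 1) (by omega) (le_refl (n - 1))
      1 n (le_refl 1) (by omega) (le_refl n) (by simp) (by omega) 1
    exact h
  · apply le_antisymm
    · rintro z hz
      rw [Subgroup.mem_map] at hz
      obtain ⟨w, hw, rfl⟩ := hz
      obtain ⟨c, rfl⟩ := mem_center_tv (n - 1) p (by omega) w hw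
      rw [shiftHom_tv n p hn 1 (n - 1) (le_refl 1) (by omega) (le_refl (n - 1))
        1 n (le_refl 1) (by omega) (le_refl n) (by simp) (by omega) c]
      exact Subgroup.mem_center_iff.mpr fun g => (tv_corner_central n p (by omega) c g).eq
    · intro z hz
      obtain ⟨c, rfl⟩ := mem_center_tv n p (by omega) z hz
      rw [Subgroup.mem_map]
      refine ⟨tv (n - 1) p 1 (n - 1) (le_refl 1) (by omega) (le_refl (n - 1)) c, ?_, ?_⟩
      · exact Subgroup.mem_center_iff.mpr
          fun g => (tv_corner_central (n - 1) p (by omega) c g).eq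
      · exact shiftHom_tv n p hn 1 (n - 1) (le_refl 1) (by omega) (le_refl (n - 1))
          1 n (le_refl 1) (by omega) (le_refl n) (by simp) (by omega) c
  · exact fun x _ y _ h => shiftHom_injective n p hn h
end

section
/- Let p be a prime and 2 ≤ k ≤ n. There exists a group homomorphism θ : UT_k(F_p) → UT_n(F_p) such that θ(t_{1,k}(λ)) = t_{1,n}(λ) for all λ ∈ F_p; in particular, θ restricts to an isomorphism from the center of UT_k(F_p) onto the center of UT_n(F_p). -/
open Matrix

/-- Index equivalence sending `Fin k` to positions `0,…,k-2,n-1` of `Fin n`. -/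
def cornerEquiv (k n : ℕ) (hk : 2 ≤ k) (hkn : k ≤ n) : (Fin k ⊕ Fin (n - k)) ≃ Fin n where
  toFun x := Sum.elim
      (fun i : Fin k => (⟨if (i : ℕ) = k - 1 then n - 1 else (i : ℕ), by
        have := i.isLt; split <;> omega⟩ : Fin n))
      (fun j : Fin (n - k) => (⟨k - 1 + (j : ℕ), by have := j.isLt; omega⟩ : Fin n)) x
  invFun x :=
    if h : (x : ℕ) < k - 1 then Sum.inl ⟨(x : ℕ), by omega⟩
    else if h2 : (x : ℕ) = n - 1 then Sum.inl ⟨k - 1, by omega⟩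
    else Sum.inr ⟨(x : ℕ) - (k - 1), by have := x.isLt; omega⟩
  left_inv := by
    rintro (i | j)
    · simp only [Sum.elim_inl]
      by_cases hi : (i : ℕ) = k - 1
      · simp only [if_pos hi, show ¬ n - 1 < k - 1 by omega, dite_false, dite_true]
        congr 1
        exact Fin.ext (by simp [hi])
      · have h : (i : ℕ) < k - 1 := by have := i.isLt; omega
        simp only [if_neg hi, h, dite_true]
    · dsimp only [Sum.elim_inr]
      have hj := j.isLt
      rw [dif_neg (by omega), dif_neg (by omega)]
      congr 1
      exact Fin.ext (by simp)
  right_inv := by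
    intro x
    dsimp only
    have hx := x.isLt
    by_cases h : (x : ℕ) < k - 1
    · rw [dif_pos h]
      simp only [Sum.elim_inl]
      exact Fin.ext (by simp; omega)
    · by_cases h2 : (x : ℕ) = n - 1
      · rw [dif_neg h, dif_pos h2]
        simp only [Sum.elim_inl]
        exact Fin.ext (by simp; omega)
      · rw [dif_neg h, dif_neg h2]
        simp only [Sum.elim_inr]
        exact Fin.ext (by simp; omega)

lemma cornerEquiv_symm_apply (k n : ℕ) (hk : 2 ≤ k) (hkn : k ≤ n) (x : Fin n) :
    (cornerEquiv k n hk hkn).symm x =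
      if h : (x : ℕ) < k - 1 then Sum.inl ⟨(x : ℕ), by omega⟩
      else if h2 : (x : ℕ) = n - 1 then Sum.inl ⟨k - 1, by omega⟩
      else Sum.inr ⟨(x : ℕ) - (k - 1), by have := x.isLt; omega⟩ := rfl

/-- The corner embedding of matrix algebras as a multiplicative monoid hom. -/
def cornerMatHom (p k n : ℕ) (hk : 2 ≤ k) (hkn : k ≤ n) :
    Matrix (Fin k) (Fin k) (ZMod p) →* Matrix (Fin n) (Fin n) (ZMod p) where
  toFun A := Matrix.reindexAlgEquiv (ZMod p) (ZMod p) (cornerEquiv k n hk hkn)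
      (Matrix.fromBlocks A 0 0 1)
  map_one' := by rw [Matrix.fromBlocks_one, _root_.map_one]
  map_mul' A B := by
    rw [show Matrix.fromBlocks (A * B) (0 : Matrix (Fin k) (Fin (n-k)) (ZMod p))
        (0 : Matrix (Fin (n-k)) (Fin k) (ZMod p)) (1 : Matrix (Fin (n-k)) (Fin (n-k)) (ZMod p)) =
        Matrix.fromBlocks A 0 0 1 * Matrix.fromBlocks B 0 0 1 from by
      simp [Matrix.fromBlocks_multiply], _root_.map_mul]

lemma cornerMatHom_apply (p k n : ℕ) (hk : 2 ≤ k) (hkn : k ≤ n)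
    (A : Matrix (Fin k) (Fin k) (ZMod p)) (x y : Fin n) :
    cornerMatHom p k n hk hkn A x y =
      Matrix.fromBlocks A 0 0 1 ((cornerEquiv k n hk hkn).symm x)
        ((cornerEquiv k n hk hkn).symm y) := rfl
lemma reindex_fromBlocks_std {l m n' R : Type*} [DecidableEq l] [DecidableEq m]
    [DecidableEq n'] [Zero R] (e : (l ⊕ m) ≃ n') (i j : l) (c : R) :
    Matrix.reindex e e (Matrix.fromBlocks (Matrix.single i j c) 0 0 0) =
      Matrix.single (e (Sum.inl i)) (e (Sum.inl j)) c := by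
  ext x y
  rw [Matrix.reindex_apply, Matrix.submatrix_apply]
  rcases hx : e.symm x with a | a <;> rcases hy : e.symm y with b | b
  · obtain rfl : x = e (Sum.inl a) := by rw [← hx, Equiv.apply_symm_apply]
    obtain rfl : y = e (Sum.inl b) := by rw [← hy, Equiv.apply_symm_apply]
    simp [Matrix.fromBlocks, Matrix.single, Equiv.apply_eq_iff_eq]
  · obtain rfl : x = e (Sum.inl a) := by rw [← hx, Equiv.apply_symm_apply]
    obtain rfl : y = e (Sum.inr b) := by rw [← hy, Equiv.apply_symm_apply]
    simp [Matrix.fromBlocks, Matrix.single, Equiv.apply_eq_iff_eq]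
  · obtain rfl : x = e (Sum.inr a) := by rw [← hx, Equiv.apply_symm_apply]
    obtain rfl : y = e (Sum.inl b) := by rw [← hy, Equiv.apply_symm_apply]
    simp [Matrix.fromBlocks, Matrix.single, Equiv.apply_eq_iff_eq]
  · obtain rfl : x = e (Sum.inr a) := by rw [← hx, Equiv.apply_symm_apply]
    obtain rfl : y = e (Sum.inr b) := by rw [← hy, Equiv.apply_symm_apply]
    simp [Matrix.fromBlocks, Matrix.single, Equiv.apply_eq_iff_eq]

lemma cornerMatHom_transvection (p k n : ℕ) (hk : 2 ≤ k) (hkn : k ≤ n) (c : ZMod p) :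
    cornerMatHom p k n hk hkn
        (Matrix.transvection (⟨0, by omega⟩ : Fin k) (⟨k - 1, by omega⟩ : Fin k) c) =
      Matrix.transvection (⟨0, by omega⟩ : Fin n) (⟨n - 1, by omega⟩ : Fin n) c := by
  have h1 : (Matrix.fromBlocks
      (Matrix.transvection (⟨0, by omega⟩ : Fin k) (⟨k - 1, by omega⟩ : Fin k) c)
      0 0 (1 : Matrix (Fin (n - k)) (Fin (n - k)) (ZMod p))) =
      1 + Matrix.fromBlocks
        (Matrix.single (⟨0, by omega⟩ : Fin k) (⟨k - 1, by omega⟩ : Fin k) c) 0 0 0 := by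
    rw [Matrix.transvection, ← Matrix.fromBlocks_one, Matrix.fromBlocks_add]
    simp
  show Matrix.reindexAlgEquiv (ZMod p) (ZMod p) (cornerEquiv k n hk hkn) _ = _
  have e0 : (cornerEquiv k n hk hkn) (Sum.inl ⟨0, by omega⟩) = (⟨0, by omega⟩ : Fin n) := by
    simp only [cornerEquiv, Equiv.coe_fn_mk, Sum.elim_inl]
    exact Fin.ext (by simp; omega)
  have e1 : (cornerEquiv k n hk hkn) (Sum.inl ⟨k - 1, by omega⟩) = (⟨n - 1, by omega⟩ : Fin n) := by
    simp only [cornerEquiv, Equiv.coe_fn_mk, Sum.elim_inl]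
    exact Fin.ext (by simp)
  rw [h1, _root_.map_add, _root_.map_one, Matrix.reindexAlgEquiv_apply,
    reindex_fromBlocks_std, e0, e1, Matrix.transvection]
lemma cornerMatHom_diag (p k n : ℕ) (hk : 2 ≤ k) (hkn : k ≤ n)
    {A : Matrix (Fin k) (Fin k) (ZMod p)} (hd : ∀ i, A i i = 1) (x : Fin n) :
    cornerMatHom p k n hk hkn A x x = 1 := by
  rw [cornerMatHom_apply, cornerEquiv_symm_apply]
  split_ifs with h h2
  · exact hd _
  · exact hd _
  · exact Matrix.one_apply_eq _

lemma cornerMatHom_lower (p k n : ℕ) (hk : 2 ≤ k) (hkn : k ≤ n)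
    {A : Matrix (Fin k) (Fin k) (ZMod p)}
    (hl : ∀ i j : Fin k, (j : ℕ) < (i : ℕ) → A i j = 0)
    (x y : Fin n) (hxy : (y : ℕ) < (x : ℕ)) :
    cornerMatHom p k n hk hkn A x y = 0 := by
  have hx := x.isLt
  have hy := y.isLt
  rw [cornerMatHom_apply, cornerEquiv_symm_apply, cornerEquiv_symm_apply]
  split_ifs with h1 h2 h3 h4 h5 h6 h7 h8 <;>
    simp only [Matrix.fromBlocks_apply₁₁, Matrix.fromBlocks_apply₁₂,
      Matrix.fromBlocks_apply₂₁, Matrix.fromBlocks_apply₂₂, Matrix.zero_apply]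
  · exact hl _ _ (by simpa using hxy)
  · omega
  · exact hl _ _ (by simp; omega)
  · omega
  · exact Matrix.one_apply_ne (by simp [Fin.ext_iff]; omega)
/-! ### The center of `UT_m(F_p)` -/

lemma transvection_corner_apply (m p : ℕ) [Fact p.Prime] (hm : 2 ≤ m) (e : ZMod p) :
    Matrix.transvection (⟨0, by omega⟩ : Fin m) ⟨m - 1, by omega⟩ e
      ⟨0, by omega⟩ ⟨m - 1, by omega⟩ = e := by
  rw [Matrix.transvection, Matrix.add_apply,
    Matrix.one_apply_ne (by simp [Fin.ext_iff]; omega),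
    Matrix.single_apply_same, zero_add]

lemma tv_inj (m p : ℕ) [Fact p.Prime] (hm : 2 ≤ m) {c d : ZMod p}
    (h : tv m p 1 m (le_refl 1) (by omega) (le_refl m) c
       = tv m p 1 m (le_refl 1) (by omega) (le_refl m) d) : c = d := by
  have h2 := congrArg (fun g : ↥(UT m p) =>
    ((g : (Matrix (Fin m) (Fin m) (ZMod p))ˣ) : Matrix (Fin m) (Fin m) (ZMod p))
      ⟨0, by omega⟩ ⟨m - 1, by omega⟩) h
  have h3 : Matrix.transvection (⟨0, by omega⟩ : Fin m) ⟨m - 1, by omega⟩ c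
        ⟨0, by omega⟩ ⟨m - 1, by omega⟩ =
      Matrix.transvection (⟨0, by omega⟩ : Fin m) ⟨m - 1, by omega⟩ d
        ⟨0, by omega⟩ ⟨m - 1, by omega⟩ := h2
  rwa [transvection_corner_apply m p hm, transvection_corner_apply m p hm] at h3

lemma mem_center_UT_iff (m p : ℕ) [Fact p.Prime] (hm : 2 ≤ m) (g : ↥(UT m p)) :
    g ∈ Subgroup.center ↥(UT m p) ↔
      ∃ c : ZMod p, g = tv m p 1 m (le_refl 1) (by omega) (le_refl m) c := by
  constructor
  · intro hg
    rw [Subgroup.mem_center_iff] at hg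
    set G : Matrix (Fin m) (Fin m) (ZMod p) :=
      ((g : (Matrix (Fin m) (Fin m) (ZMod p))ˣ) : Matrix (Fin m) (Fin m) (ZMod p)) with hGdef
    have key : ∀ a b : Fin m, (a : ℕ) < (b : ℕ) →
        Matrix.single a b (1 : ZMod p) * G = G * Matrix.single a b 1 := by
      intro a b hab
      have hb := b.isLt
      have hT := hg (tv m p ((a : ℕ) + 1) ((b : ℕ) + 1) (by omega) (by omega) (by omega) 1)
      have hmat : Matrix.transvection a b (1 : ZMod p) * G = G * Matrix.transvection a b 1 := by
        have h4 := congrArg (fun z : ↥(UT m p) =>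
          ((z : (Matrix (Fin m) (Fin m) (ZMod p))ˣ) : Matrix (Fin m) (Fin m) (ZMod p))) hT
        simp only [MulMemClass.coe_mul, Units.val_mul] at h4
        exact h4
      have h2 : (1 + Matrix.single a b (1 : ZMod p)) * G =
          G * (1 + Matrix.single a b 1) := hmat
      rw [Matrix.add_mul, Matrix.mul_add, Matrix.one_mul, Matrix.mul_one] at h2
      exact add_left_cancel h2
    have hcol : ∀ a b x : Fin m, (a : ℕ) < (b : ℕ) → x ≠ a → G x a = 0 := by
      intro a b x hab hxa
      have h : (Matrix.single a b (1 : ZMod p) * G) x b =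
          (G * Matrix.single a b (1 : ZMod p)) x b := by rw [key a b hab]
      rw [Matrix.single_mul_apply_of_ne _ _ _ _ _ hxa,
        Matrix.mul_single_apply_same, mul_one] at h
      exact h.symm
    have hrow : ∀ a b y : Fin m, (a : ℕ) < (b : ℕ) → y ≠ b → G b y = 0 := by
      intro a b y hab hyb
      have h : (Matrix.single a b (1 : ZMod p) * G) a y =
          (G * Matrix.single a b (1 : ZMod p)) a y := by rw [key a b hab]
      rw [Matrix.single_mul_apply_same, one_mul,
        Matrix.mul_single_apply_of_ne _ _ _ _ _ hyb] at h
      exact h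
    refine ⟨G ⟨0, by omega⟩ ⟨m - 1, by omega⟩, ?_⟩
    apply Subtype.ext
    apply Units.ext
    show G = Matrix.transvection ⟨0, by omega⟩ ⟨m - 1, by omega⟩ (G ⟨0, by omega⟩ ⟨m - 1, by omega⟩)
    obtain ⟨hd, hl⟩ := g.2
    rw [← hGdef] at hd hl
    ext x y
    have hx := x.isLt
    have hy := y.isLt
    rw [Matrix.transvection, Matrix.add_apply]
    rcases lt_trichotomy (x : ℕ) (y : ℕ) with hlt | heq | hgt
    · rw [Matrix.one_apply_ne (by simp [Fin.ext_iff]; omega)]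
      by_cases hc : (x : ℕ) = 0 ∧ (y : ℕ) = m - 1
      · have hx0 : x = ⟨0, by omega⟩ := Fin.ext hc.1
        have hy0 : y = ⟨m - 1, by omega⟩ := Fin.ext hc.2
        rw [hx0, hy0, Matrix.single_apply_same, zero_add]
      · have hzero : G x y = 0 := by
          by_cases hym : (y : ℕ) = m - 1
          · have hx1 : 0 < (x : ℕ) := by
              rcases Nat.eq_zero_or_pos (x : ℕ) with h0 | h0
              · exact absurd ⟨h0, hym⟩ hc
              · exact h0
            exact hrow ⟨0, by omega⟩ x y (by simpa using hx1)
              (by intro hh; rw [hh] at hlt; omega)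
          · exact hcol y ⟨m - 1, by omega⟩ x (by simp; omega)
              (by intro hh; rw [hh] at hlt; omega)
        rw [hzero, Matrix.single_apply_of_ne _ _ _ _ _
          (by simp only [Fin.ext_iff]; omega), add_zero]
    · have : x = y := Fin.ext heq
      subst this
      rw [Matrix.one_apply_eq, hd x,
        Matrix.single_apply_of_ne _ _ _ _ _
          (by simp only [Fin.ext_iff]; omega), add_zero]
    · rw [hl x y hgt, Matrix.one_apply_ne (by simp [Fin.ext_iff]; omega),
        Matrix.single_apply_of_ne _ _ _ _ _
          (by simp only [Fin.ext_iff]; omega),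
        zero_add]
  · rintro ⟨c, rfl⟩
    rw [Subgroup.mem_center_iff]
    intro h
    exact tv_corner_central m p hm c h

/-! ### The corner homomorphism on groups -/

def cornerHom (p k n : ℕ) [Fact p.Prime] (hk : 2 ≤ k) (hkn : k ≤ n) :
    ↥(UT k p) →* ↥(UT n p) where
  toFun g := ⟨Units.map (cornerMatHom p k n hk hkn)
      (g : (Matrix (Fin k) (Fin k) (ZMod p))ˣ), by
    obtain ⟨hd, hl⟩ := g.2
    constructor
    · intro i
      exact cornerMatHom_diag p k n hk hkn hd i
    · intro i j hij
      exact cornerMatHom_lower p k n hk hkn hl i j hij⟩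
  map_one' := by
    apply Subtype.ext
    show Units.map _ _ = 1
    rw [OneMemClass.coe_one, _root_.map_one]
  map_mul' g h := by
    apply Subtype.ext
    show Units.map _ _ = _
    rw [MulMemClass.coe_mul, _root_.map_mul]
    rfl

lemma cornerHom_tv (p k n : ℕ) [Fact p.Prime] (hk : 2 ≤ k) (hkn : k ≤ n) (c : ZMod p) :
    cornerHom p k n hk hkn (tv k p 1 k (le_refl 1) (lt_of_lt_of_le one_lt_two hk) (le_refl k) c)
      = tv n p 1 n (le_refl 1) (lt_of_lt_of_le one_lt_two (hk.trans hkn)) (le_refl n) c := by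
  apply Subtype.ext
  apply Units.ext
  show cornerMatHom p k n hk hkn
      (Matrix.transvection (⟨0, by omega⟩ : Fin k) ⟨k - 1, by omega⟩ c) = _
  exact cornerMatHom_transvection p k n hk hkn c

theorem exists_corner_hom (p k n : ℕ) [Fact p.Prime] (hk : 2 ≤ k) (hkn : k ≤ n) :
    ∃ θ : ↥(UT k p) →* ↥(UT n p),
      (∀ c : ZMod p,
        θ (tv k p 1 k (le_refl 1) (by omega) (le_refl k) c)
          = tv n p 1 n (le_refl 1) (by omega) (le_refl n) c) ∧
      Subgroup.map θ (Subgroup.center ↥(UT k p)) = Subgroup.center ↥(UT n p) ∧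
      Set.InjOn θ (Subgroup.center ↥(UT k p)) := by
  have hn : 2 ≤ n := hk.trans hkn
  refine ⟨cornerHom p k n hk hkn, fun c => cornerHom_tv p k n hk hkn c, ?_, ?_⟩
  · ext x
    simp only [Subgroup.mem_map]
    constructor
    · rintro ⟨g, hgc, rfl⟩
      obtain ⟨c, rfl⟩ := (mem_center_UT_iff k p hk g).1 hgc
      rw [cornerHom_tv p k n hk hkn c]
      exact (mem_center_UT_iff n p hn _).2 ⟨c, rfl⟩
    · intro hx
      obtain ⟨c, rfl⟩ := (mem_center_UT_iff n p hn x).1 hx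
      exact ⟨tv k p 1 k (le_refl 1) (by omega) (le_refl k) c,
        (mem_center_UT_iff k p hk _).2 ⟨c, rfl⟩, cornerHom_tv p k n hk hkn c⟩
  · intro x hx y hy hxy
    obtain ⟨c, rfl⟩ := (mem_center_UT_iff k p hk x).1 hx
    obtain ⟨d, rfl⟩ := (mem_center_UT_iff k p hk y).1 hy
    have h2 : tv n p 1 n (le_refl 1) (by omega) (le_refl n) c
        = tv n p 1 n (le_refl 1) (by omega) (le_refl n) d := by
      rw [← cornerHom_tv p k n hk hkn c, ← cornerHom_tv p k n hk hkn d]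
      exact hxy
    rw [tv_inj n p hn h2]
end
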